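/- Let E be the Cantor group, the set of all sequences x : ℕ → ℤ/2ℤ under pointwise addition, equipped with the ultrametric d(x,y) = 2^{-n} for distinct x,y, where n is the least index with x(n) ≠ y(n). For every pair of reals α, β with 0 ≤ α ≤ β ≤ 1 there exists a closed subgroup U of E whose lower box dimension equals α and whose upper box dimension equals β; moreover U can be chosen so that its Hausdorff dimension equals α as well. -/

import Mathlib

open Filter MeasureTheory
open scoped ENNReal NNReal Topology Classical
set_option linter.unusedSectionVars false
set_option linter.unusedVariables false

namespace CantorGroup

open Classical in
/-- The ultrametric on the Cantor group `E = (ℕ → ℤ/2ℤ)`: `d(x,x) = 0` and, for `x ≠ y`,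
`d(x,y) = 2^{-n}` where `n` is the least index with `x n ≠ y n`. -/
noncomputable def cantorDist (x y : ℕ → ZMod 2) : ℝ :=
  if h : ∃ n, x n ≠ y n then (2 : ℝ)⁻¹ ^ Nat.find h else 0

/-- The closed subgroup `U_R = { x ∈ E : x n = 0 for all n ∉ R }`. -/
def UR (R : Set ℕ) : Set (ℕ → ZMod 2) := {x | ∀ n : ℕ, n ∉ R → x n = 0}

/-- `coverNum A α` is the least cardinality of a cover of `A` by sets of diameter at
most `α` (with junk value `0` if no finite such cover exists). -/
noncomputable def coverNum {X : Type*} [MetricSpace X] (A : Set X) (α : ℝ) : ℕ :=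
  sInf {k : ℕ | ∃ 𝒞 : Finset (Set X), 𝒞.card = k ∧
    (∀ E ∈ 𝒞, Metric.diam E ≤ α) ∧ A ⊆ ⋃ E ∈ 𝒞, E}

/-- The lower box (Minkowski) dimension of a set in a metric space. -/
noncomputable def lowerBoxDim {X : Type*} [MetricSpace X] (A : Set X) : ℝ :=
  Filter.liminf (fun α : ℝ => Real.log (coverNum A α) / Real.log (1 / α))
    (nhdsWithin 0 (Set.Ioi 0))

/-- The upper box (Minkowski) dimension of a set in a metric space. -/
noncomputable def upperBoxDim {X : Type*} [MetricSpace X] (A : Set X) : ℝ :=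
  Filter.limsup (fun α : ℝ => Real.log (coverNum A α) / Real.log (1 / α))
    (nhdsWithin 0 (Set.Ioi 0))



open scoped Classical
set_option linter.unusedSectionVars false

/-! ### The sequence construction -/

def Dpred (β : ℝ) (j v A Δ : ℕ) : Prop :=
  (β * ((v:ℝ) + Δ) ≤ (A:ℝ) + Δ) ∨ Δ = (j+1)*v

lemma Dpred_ex (β : ℝ) (j v A : ℕ) : ∃ Δ, Dpred β j v A Δ := ⟨(j+1)*v, Or.inr rfl⟩

noncomputable def Dstep (β : ℝ) (j v A : ℕ) : ℕ := Nat.find (Dpred_ex β j v A)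

def Tpred (α : ℝ) (j p A t : ℕ) : Prop :=
  ((A:ℝ) ≤ α * ((p:ℝ) + 1 + (t:ℝ))) ∨ t = (j+1)*A

lemma Tpred_ex (α : ℝ) (j p A : ℕ) : ∃ t, Tpred α j p A t := ⟨(j+1)*A, Or.inr rfl⟩

noncomputable def Tstep (α : ℝ) (j p A : ℕ) : ℕ := Nat.find (Tpred_ex α j p A)

lemma Dstep_spec (β : ℝ) (j v A : ℕ) : Dpred β j v A (Dstep β j v A) := Nat.find_spec _
lemma Dstep_min {β : ℝ} {j v A k : ℕ} (h : k < Dstep β j v A) :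
    ¬ (β * ((v:ℝ) + k) ≤ (A:ℝ) + k) := by
  have := Nat.find_min (Dpred_ex β j v A) h; rw [Dpred] at this; tauto
lemma Tstep_spec (α : ℝ) (j p A : ℕ) : Tpred α j p A (Tstep α j p A) := Nat.find_spec _
lemma Tstep_min {α : ℝ} {j p A k : ℕ} (h : k < Tstep α j p A) :
    ¬ ((A:ℝ) ≤ α * ((p:ℝ) + 1 + (k:ℝ))) := by
  have := Nat.find_min (Tpred_ex α j p A) h; rw [Tpred] at this; tauto

noncomputable def VA (α β : ℝ) : ℕ → ℕ × ℕ
  | 0 => (1, 0)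
  | (j+1) =>
    let v := (VA α β j).1
    let A := (VA α β j).2
    let Δ := Dstep β j v A
    (v + Δ + 1 + Tstep α j (v + Δ) (A + Δ), A + Δ)

noncomputable def V (α β : ℝ) (j : ℕ) : ℕ := (VA α β j).1
noncomputable def Aa (α β : ℝ) (j : ℕ) : ℕ := (VA α β j).2
noncomputable def DD (α β : ℝ) (j : ℕ) : ℕ := Dstep β j (V α β j) (Aa α β j)
noncomputable def P (α β : ℝ) (j : ℕ) : ℕ := V α β j + DD α β j

variable {α β : ℝ}

lemma V_zero : V α β 0 = 1 := rfl
lemma Aa_zero : Aa α β 0 = 0 := rfl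
lemma Aa_succ (j : ℕ) : Aa α β (j+1) = Aa α β j + DD α β j := rfl
lemma V_succ (j : ℕ) : V α β (j+1) = P α β j + 1 + Tstep α j (P α β j) (Aa α β (j+1)) := rfl

lemma Aa_le_V (j : ℕ) : Aa α β j ≤ V α β j := by
  induction j with
  | zero => simp [V_zero, Aa_zero]
  | succ j ih =>
      rw [Aa_succ, V_succ]
      have : Aa α β j + DD α β j ≤ P α β j := by
        simpa [P, DD] using Nat.add_le_add_right ih (DD α β j)
      omega

lemma V_le_P (j : ℕ) : V α β j ≤ P α β j := Nat.le_add_right _ _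
lemma P_lt_V_succ (j : ℕ) : P α β j < V α β (j+1) := by rw [V_succ]; omega
lemma V_lt_V_succ (j : ℕ) : V α β j < V α β (j+1) :=
  lt_of_le_of_lt (V_le_P j) (P_lt_V_succ j)
lemma V_strictMono : StrictMono (V α β) := strictMono_nat_of_lt_succ V_lt_V_succ
lemma V_pos (j : ℕ) : 1 ≤ V α β j := by
  induction j with
  | zero => simp [V_zero]
  | succ j ih => exact le_trans ih (V_lt_V_succ j).le
lemma succ_le_V (j : ℕ) : j + 1 ≤ V α β j := by
  induction j with
  | zero => simp [V_zero]
  | succ j ih => have := V_lt_V_succ (α := α) (β := β) j; omega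
lemma P_le_V {j k : ℕ} (h : j < k) : P α β j ≤ V α β k :=
  le_trans (P_lt_V_succ j).le (V_strictMono.monotone h)
lemma Aa_le_P (j : ℕ) : Aa α β (j+1) ≤ P α β j := by
  have := Aa_le_V (α := α) (β := β) j
  rw [Aa_succ]; unfold P; omega

section Ineqs
variable (h0 : 0 ≤ α) (hαβ : α ≤ β) (h1 : β ≤ 1)
include h0 hαβ h1

lemma peak_lb (j : ℕ) : (β - 1/(j+2)) * (P α β j) ≤ (Aa α β (j+1) : ℝ) := by
  have hv : (1:ℝ) ≤ V α β j := by exact_mod_cast V_pos (α := α) (β := β) j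
  have hP : (P α β j : ℝ) = (V α β j : ℝ) + (DD α β j : ℝ) := by unfold P; push_cast; ring
  have hA : (Aa α β (j+1) : ℝ) = (Aa α β j : ℝ) + (DD α β j : ℝ) := by
    rw [Aa_succ]; push_cast; ring
  have hAnn : (0:ℝ) ≤ Aa α β j := Nat.cast_nonneg _
  have hj : (0:ℝ) < (j:ℝ) + 2 := by positivity
  rcases Dstep_spec β j (V α β j) (Aa α β j) with h | h
  · have hPnn : (0:ℝ) ≤ (P α β j : ℝ) := Nat.cast_nonneg _
    have hβP : β * (P α β j : ℝ) ≤ (Aa α β (j+1) : ℝ) := by rw [hP, hA]; exact h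
    have hd : (0:ℝ) ≤ 1/((j:ℝ)+2) := by positivity
    nlinarith
  · have hD : (DD α β j : ℝ) = ((j:ℝ)+1) * (V α β j) := by
      unfold DD; rw [h]; push_cast; ring
    have h2 : (β - 1/(j+2)) * ((j:ℝ)+2) ≤ (j:ℝ)+1 := by
      rw [sub_mul, div_mul_cancel₀ _ hj.ne']
      nlinarith
    calc (β - 1/(j+2)) * (P α β j)
        = (β - 1/(j+2)) * (((j:ℝ)+2) * (V α β j)) := by rw [hP, hD]; ring
      _ ≤ ((j:ℝ)+1) * (V α β j) := by
          rcases le_or_gt (β - 1/(j+2)) 0 with hb | hb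
          · nlinarith
          · nlinarith
      _ ≤ (Aa α β (j+1) : ℝ) := by rw [hA, hD]; nlinarith

lemma val_ub (j : ℕ) : (Aa α β (j+1) : ℝ) ≤ α * V α β (j+1) + (V α β (j+1)) / (j+1) := by
  have hv : (V α β (j+1) : ℝ) = (P α β j : ℝ) + 1 + (Tstep α j (P α β j) (Aa α β (j+1)) : ℝ) := by
    rw [V_succ]; push_cast; ring
  have hj : (0:ℝ) < (j:ℝ) + 1 := by positivity
  have hvnn : (0:ℝ) ≤ V α β (j+1) := Nat.cast_nonneg _
  rcases Tstep_spec α j (P α β j) (Aa α β (j+1)) with h | h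
  · have : (Aa α β (j+1) : ℝ) ≤ α * (V α β (j+1)) := by rw [hv]; exact h
    nlinarith [div_nonneg hvnn hj.le]
  · have hge : ((j:ℝ)+1) * (Aa α β (j+1)) ≤ (V α β (j+1) : ℝ) := by
      rw [hv, h]; push_cast; nlinarith [Nat.cast_nonneg (α := ℝ) (P α β j)]
    have : (Aa α β (j+1) : ℝ) ≤ (V α β (j+1)) / (j+1) := by
      rw [le_div_iff₀ hj]; linarith
    nlinarith [Nat.cast_nonneg (α := ℝ) (Aa α β (j+1))]

lemma val_lb (j : ℕ) :
    α * V α β (j+1) - (V α β (j+1)) / (j+2) - 1 ≤ (Aa α β (j+1) : ℝ) := by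
  set t := Tstep α j (P α β j) (Aa α β (j+1)) with ht
  have hv : (V α β (j+1) : ℝ) = (P α β j : ℝ) + 1 + (t : ℝ) := by
    rw [V_succ]; push_cast; ring
  have hj : (0:ℝ) < (j:ℝ) + 2 := by positivity
  have hvnn : (0:ℝ) ≤ V α β (j+1) := Nat.cast_nonneg _
  have hdivnn : (0:ℝ) ≤ (V α β (j+1)) / (j+2) := div_nonneg hvnn hj.le
  rcases Nat.eq_zero_or_pos t with h | h
  · -- valley is right after the peak; use peak_lb
    have hp := peak_lb h0 hαβ h1 (α := α) (β := β) j
    have hPnn : (0:ℝ) ≤ P α β j := Nat.cast_nonneg _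
    have hVP : (V α β (j+1) : ℝ) = (P α β j : ℝ) + 1 := by rw [hv, h]; simp
    have hj2 : (0:ℝ) ≤ 1/((j:ℝ)+2) := by positivity
    have hab : (α - 1/(j+2)) * (P α β j : ℝ) ≤ (Aa α β (j+1) : ℝ) :=
      le_trans (mul_le_mul_of_nonneg_right (by linarith : α - 1/((j:ℝ)+2) ≤ β - 1/((j:ℝ)+2)) hPnn) hp
    have hsplit : ((P α β j:ℝ)+1)/((j:ℝ)+2) = (P α β j:ℝ)/((j:ℝ)+2) + 1/((j:ℝ)+2) :=
      add_div _ _ _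
    have hPd : (P α β j:ℝ)/((j:ℝ)+2) = (P α β j:ℝ) * (1/((j:ℝ)+2)) := by ring
    rw [hVP, hsplit]
    nlinarith [hab, hj2, le_trans hαβ h1]
  · -- minimality at t-1
    have hmin := Tstep_min (α := α) (j := j) (p := P α β j) (A := Aa α β (j+1))
      (k := t - 1) (by omega)
    push_neg at hmin
    have hc : ((t:ℝ) - 1) = ((t - 1 : ℕ) : ℝ) := by
      have : (1:ℕ) ≤ t := h
      push_cast [Nat.cast_sub this]; ring
    have : α * ((P α β j : ℝ) + 1 + ((t-1:ℕ):ℝ)) < (Aa α β (j+1) : ℝ) := hmin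
    have hlt : α * ((V α β (j+1) : ℝ) - 1) < (Aa α β (j+1) : ℝ) := by
      rw [hv]; rw [← hc] at this; nlinarith [le_refl (0:ℝ)]
    nlinarith

lemma peak_ub (j : ℕ) :
    (Aa α β (j+2) : ℝ) ≤ β * P α β (j+1) + (P α β (j+1)) / (j+1) + 1 := by
  have hβ0 : (0:ℝ) ≤ β := le_trans h0 hαβ
  have hj : (0:ℝ) < (j:ℝ) + 1 := by positivity
  have hPnn : (0:ℝ) ≤ (P α β (j+1) : ℝ) := Nat.cast_nonneg _
  have hdnn : (0:ℝ) ≤ (P α β (j+1) : ℝ)/((j:ℝ)+1) := div_nonneg hPnn hj.le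
  set Δ := DD α β (j+1) with hΔ
  have hP : (P α β (j+1) : ℝ) = (V α β (j+1) : ℝ) + (Δ : ℝ) := by unfold P; push_cast; ring
  have hA : (Aa α β (j+2) : ℝ) = (Aa α β (j+1) : ℝ) + (Δ : ℝ) := by rw [Aa_succ]; push_cast; ring
  rcases Nat.eq_zero_or_pos Δ with h | h
  · -- peak equals previous valley
    have hPV : (P α β (j+1) : ℝ) = (V α β (j+1) : ℝ) := by rw [hP, h]; simp
    have hvu := val_ub h0 hαβ h1 (α := α) (β := β) j
    have hAA : (Aa α β (j+2) : ℝ) = (Aa α β (j+1) : ℝ) := by rw [hA, h]; simp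
    rw [hAA, hPV]
    have : α * (V α β (j+1):ℝ) ≤ β * (V α β (j+1):ℝ) :=
      mul_le_mul_of_nonneg_right hαβ (Nat.cast_nonneg _)
    linarith
  · have hΔ' : Δ = Dstep β (j+1) (V α β (j+1)) (Aa α β (j+1)) := hΔ
    have hmin := Dstep_min (β := β) (j := j+1) (v := V α β (j+1)) (A := Aa α β (j+1))
      (k := Δ - 1) (by rw [← hΔ']; omega)
    push_neg at hmin
    have hc : ((Δ - 1 : ℕ) : ℝ) = (Δ:ℝ) - 1 := by
      push_cast [Nat.cast_sub h]; ring
    rw [hc] at hmin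
    -- hmin : A + (Δ - 1) < β * (v + (Δ - 1))
    have : (Aa α β (j+2) : ℝ) < β * ((P α β (j+1):ℝ) - 1) + 1 := by
      rw [hA, hP]; nlinarith
    nlinarith

/-! ### ratio-style bounds -/

lemma key_lb (j : ℕ) : (α - 2/(j+1)) * V α β (j+1) ≤ (Aa α β (j+1) : ℝ) := by
  have h := val_lb h0 hαβ h1 (α := α) (β := β) j
  have hv : ((j:ℝ)+2) ≤ (V α β (j+1) : ℝ) := by exact_mod_cast succ_le_V (j+1)
  have hj1 : (0:ℝ) < (j:ℝ)+1 := by positivity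
  have hj2 : (0:ℝ) < (j:ℝ)+2 := by positivity
  have h1' : (1:ℝ) ≤ (V α β (j+1) : ℝ)/((j:ℝ)+1) := by
    rw [le_div_iff₀ hj1]; linarith
  have h2' : (V α β (j+1) : ℝ)/((j:ℝ)+2) ≤ (V α β (j+1) : ℝ)/((j:ℝ)+1) :=
    div_le_div_of_nonneg_left (by positivity) hj1 (by linarith)
  have hexp : (α - 2/((j:ℝ)+1)) * V α β (j+1)
      = α * V α β (j+1) - 2 * ((V α β (j+1) : ℝ)/((j:ℝ)+1)) := by
    field_simp
  rw [hexp]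
  linarith

lemma key_ub (j : ℕ) : (Aa α β (j+1) : ℝ) ≤ (α + 1/(j+1)) * V α β (j+1) := by
  have h := val_ub h0 hαβ h1 (α := α) (β := β) j
  have hexp : (α + 1/((j:ℝ)+1)) * V α β (j+1)
      = α * V α β (j+1) + (V α β (j+1) : ℝ)/((j:ℝ)+1) := by
    field_simp
  rw [hexp]; linarith

lemma peakr_lb (j : ℕ) : (β - 1/(j+1)) * P α β j ≤ (Aa α β (j+1) : ℝ) := by
  have h := peak_lb h0 hαβ h1 (α := α) (β := β) j
  have hPnn : (0:ℝ) ≤ (P α β j : ℝ) := Nat.cast_nonneg _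
  have : (1:ℝ)/((j:ℝ)+2) ≤ 1/((j:ℝ)+1) :=
    div_le_div_of_nonneg_left (by norm_num) (by positivity) (by linarith)
  nlinarith

lemma peakr_ub (j : ℕ) : (Aa α β (j+2) : ℝ) ≤ (β + 2/(j+1)) * P α β (j+1) := by
  have h := peak_ub h0 hαβ h1 (α := α) (β := β) j
  have hv : ((j:ℝ)+2) ≤ (V α β (j+1) : ℝ) := by exact_mod_cast succ_le_V (j+1)
  have hVP : (V α β (j+1) : ℕ) ≤ P α β (j+1) := V_le_P _
  have hv' : ((j:ℝ)+2) ≤ (P α β (j+1) : ℝ) := le_trans hv (by exact_mod_cast hVP)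
  have hj1 : (0:ℝ) < (j:ℝ)+1 := by positivity
  have h1' : (1:ℝ) ≤ (P α β (j+1) : ℝ)/((j:ℝ)+1) := by
    rw [le_div_iff₀ hj1]; linarith
  have hexp : (β + 2/((j:ℝ)+1)) * P α β (j+1)
      = β * P α β (j+1) + 2 * ((P α β (j+1) : ℝ)/((j:ℝ)+1)) := by
    field_simp
  rw [hexp]; linarith

end Ineqs

/-! ### The set `R` and its counting function -/

def Rset (α β : ℝ) : Set ℕ := {n | ∃ j, V α β j ≤ n ∧ n < P α β j}

noncomputable def cnt (α β : ℝ) (m : ℕ) : ℕ :=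
  ((Finset.range m).filter (fun i => i ∈ Rset α β)).card

lemma cnt_le_self (m : ℕ) : cnt α β m ≤ m := by
  have := Finset.card_filter_le (Finset.range m) (fun i => i ∈ Rset α β)
  simpa [cnt] using this

lemma cnt_climb (j n : ℕ) (hn1 : V α β j ≤ n) (hn2 : n ≤ P α β j) :
    cnt α β n = cnt α β (V α β j) + (n - V α β j) := by
  have hset : (Finset.range n).filter (fun i => i ∈ Rset α β)
      = ((Finset.range (V α β j)).filter (fun i => i ∈ Rset α β)) ∪
        Finset.Ico (V α β j) n := by
    ext i
    simp only [Finset.mem_filter, Finset.mem_range, Finset.mem_union, Finset.mem_Ico]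
    constructor
    · rintro ⟨hin, hiR⟩
      rcases lt_or_ge i (V α β j) with h | h
      · exact Or.inl ⟨h, hiR⟩
      · exact Or.inr ⟨h, hin⟩
    · rintro (⟨hiv, hiR⟩ | ⟨h1, h2⟩)
      · exact ⟨lt_of_lt_of_le hiv hn1, hiR⟩
      · exact ⟨h2, ⟨j, h1, lt_of_lt_of_le h2 hn2⟩⟩
  have hdisj : Disjoint ((Finset.range (V α β j)).filter (fun i => i ∈ Rset α β))
      (Finset.Ico (V α β j) n) := by
    rw [Finset.disjoint_left]
    intro i hi hi2
    simp only [Finset.mem_filter, Finset.mem_range] at hi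
    simp only [Finset.mem_Ico] at hi2
    omega
  rw [cnt, hset, Finset.card_union_of_disjoint hdisj, Nat.card_Ico]
  rfl

lemma cnt_flat (j n : ℕ) (hn1 : P α β j ≤ n) (hn2 : n ≤ V α β (j+1)) :
    cnt α β n = cnt α β (P α β j) := by
  have hset : (Finset.range n).filter (fun i => i ∈ Rset α β)
      = (Finset.range (P α β j)).filter (fun i => i ∈ Rset α β) := by
    ext i
    simp only [Finset.mem_filter, Finset.mem_range]
    constructor
    · rintro ⟨hin, hiR⟩
      refine ⟨?_, hiR⟩
      obtain ⟨k, hk1, hk2⟩ := hiR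
      rcases le_or_gt k j with hkj | hkj
      · have : P α β k ≤ P α β j := by
          rcases eq_or_lt_of_le hkj with rfl | hlt
          · exact le_refl _
          · exact le_trans (P_le_V hlt) (V_le_P j)
        omega
      · have : V α β (j+1) ≤ V α β k := V_strictMono.monotone hkj
        omega
    · rintro ⟨hin, hiR⟩
      exact ⟨by omega, hiR⟩
  rw [cnt, hset]; rfl

lemma cnt_V (j : ℕ) : cnt α β (V α β j) = Aa α β j := by
  induction j with
  | zero =>
      rw [V_zero, Aa_zero, cnt]
      convert Finset.card_empty
      rw [Finset.eq_empty_iff_forall_notMem]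
      intro i hi
      simp only [Finset.mem_filter, Finset.mem_range] at hi
      obtain ⟨hi1, k, hk1, hk2⟩ := hi
      have := V_pos (α := α) (β := β) k
      omega
  | succ j ih =>
      have h1 : cnt α β (V α β (j+1)) = cnt α β (P α β j) :=
        cnt_flat j _ (P_lt_V_succ j).le (le_refl _)
      have h2 : cnt α β (P α β j) = cnt α β (V α β j) + (P α β j - V α β j) :=
        cnt_climb j _ (V_le_P j) (le_refl _)
      rw [h1, h2, ih, Aa_succ]
      unfold P
      omega

lemma cnt_P (j : ℕ) : cnt α β (P α β j) = Aa α β (j+1) := by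
  rw [cnt_climb j _ (V_le_P j) (le_refl _), cnt_V, Aa_succ]
  unfold P; omega

lemma exists_block {K n : ℕ} (hn : V α β K ≤ n) :
    ∃ k, K ≤ k ∧ V α β k ≤ n ∧ n < V α β (k+1) := by
  have hex : ∃ j, n < V α β (j+1) := ⟨n, by have := succ_le_V (α := α) (β := β) (n+1); omega⟩
  refine ⟨Nat.find hex, ?_, ?_, Nat.find_spec hex⟩
  · by_contra h
    push_neg at h
    have : n < V α β (Nat.find hex + 1) := Nat.find_spec hex
    have hmono : V α β (Nat.find hex + 1) ≤ V α β K := V_strictMono.monotone (by omega)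
    omega
  · rcases Nat.eq_zero_or_pos (Nat.find hex) with h | h
    · rw [h, V_zero]
      have := V_pos (α := α) (β := β) K
      omega
    · have := Nat.find_min hex (m := Nat.find hex - 1) (by omega)
      push_neg at this
      have heq : Nat.find hex - 1 + 1 = Nat.find hex := by omega
      rwa [heq] at this

/-! ### block bounds -/

lemma nat_climb_lb {A v n : ℕ} (hAv : A ≤ v) (hvn : v ≤ n) :
    A * n ≤ (A + (n - v)) * v := by
  obtain ⟨s, rfl⟩ : ∃ s, n = v + s := ⟨n - v, by omega⟩
  calc A * (v + s) = A * v + A * s := by ring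
    _ ≤ A * v + s * v := by
        have := Nat.mul_le_mul_left s hAv
        nlinarith
    _ = (A + (v + s - v)) * v := by rw [Nat.add_sub_cancel_left]; ring

lemma nat_climb_ub {A v n p : ℕ} (hAv : A ≤ v) (hvn : v ≤ n) (hnp : n ≤ p) :
    (A + (n - v)) * p ≤ (A + (p - v)) * n := by
  obtain ⟨s, rfl⟩ : ∃ s, n = v + s := ⟨n - v, by omega⟩
  obtain ⟨u, rfl⟩ : ∃ u, p = v + s + u := ⟨p - (v+s), by omega⟩
  have h1 : v + s - v = s := by omega
  have h2 : v + s + u - v = s + u := by omega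
  rw [h1, h2]
  have := Nat.mul_le_mul_left u hAv
  nlinarith

section Blocks
variable (h0 : 0 ≤ α) (hαβ : α ≤ β) (h1 : β ≤ 1)
include h0 hαβ h1

lemma key_lb' {k : ℕ} (hk : 1 ≤ k) : (α - 2/k) * V α β k ≤ (Aa α β k : ℝ) := by
  obtain ⟨j, rfl⟩ : ∃ j, k = j + 1 := ⟨k - 1, by omega⟩
  have := key_lb h0 hαβ h1 (α := α) (β := β) j
  have hc : ((j:ℝ)+1) = ((j+1 : ℕ) : ℝ) := by push_cast; ring
  rwa [hc] at this

lemma key_ub' {k : ℕ} (hk : 1 ≤ k) : (Aa α β k : ℝ) ≤ (α + 1/k) * V α β k := by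
  obtain ⟨j, rfl⟩ : ∃ j, k = j + 1 := ⟨k - 1, by omega⟩
  have := key_ub h0 hαβ h1 (α := α) (β := β) j
  have hc : ((j:ℝ)+1) = ((j+1 : ℕ) : ℝ) := by push_cast; ring
  rwa [hc] at this

lemma peakr_ub' {k : ℕ} (hk : 1 ≤ k) : (Aa α β (k+1) : ℝ) ≤ (β + 2/k) * P α β k := by
  obtain ⟨j, rfl⟩ : ∃ j, k = j + 1 := ⟨k - 1, by omega⟩
  have := peakr_ub h0 hαβ h1 (α := α) (β := β) j
  have hc : ((j:ℝ)+1) = ((j+1 : ℕ) : ℝ) := by push_cast; ring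
  rwa [hc] at this

lemma block_bounds {k n : ℕ} (hk : 1 ≤ k) (hn1 : V α β k ≤ n) (hn2 : n < V α β (k+1)) :
    (α - 2/k) * n ≤ (cnt α β n : ℝ) ∧ (cnt α β n : ℝ) ≤ (β + 2/k) * n := by
  have hkR : (0:ℝ) < (k:ℝ) := by exact_mod_cast hk
  have hβ0 : (0:ℝ) ≤ β := le_trans h0 hαβ
  have hnnn : (0:ℝ) ≤ (n:ℝ) := Nat.cast_nonneg _
  have hVpos : (0:ℝ) < (V α β k : ℝ) := by exact_mod_cast V_pos (α := α) (β := β) k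
  have hPpos : (0:ℝ) < (P α β k : ℝ) :=
    lt_of_lt_of_le hVpos (by exact_mod_cast V_le_P (α := α) (β := β) k)
  rcases le_or_gt n (P α β k) with hcase | hcase
  · -- climb
    have hcnt : cnt α β n = Aa α β k + (n - V α β k) := by
      rw [cnt_climb k n hn1 hcase, cnt_V]
    constructor
    · have hnat := nat_climb_lb (Aa_le_V (α := α) (β := β) k) hn1
      rw [← hcnt] at hnat
      have hnatR : (Aa α β k : ℝ) * n ≤ (cnt α β n : ℝ) * V α β k := by exact_mod_cast hnat
      have hkey := key_lb' h0 hαβ h1 (α := α) (β := β) hk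
      have hstep : (α - 2/k) * n * V α β k ≤ (cnt α β n : ℝ) * V α β k := by
        calc (α - 2/k) * n * V α β k = ((α - 2/k) * V α β k) * n := by ring
          _ ≤ (Aa α β k : ℝ) * n := mul_le_mul_of_nonneg_right hkey hnnn
          _ ≤ (cnt α β n : ℝ) * V α β k := hnatR
      exact le_of_mul_le_mul_right hstep hVpos
    · have hnat := nat_climb_ub (Aa_le_V (α := α) (β := β) k) hn1 hcase
      rw [← hcnt] at hnat
      have hP' : Aa α β k + (P α β k - V α β k) = Aa α β (k+1) := by
        rw [Aa_succ]; unfold P; omega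
      rw [hP'] at hnat
      have hnatR : (cnt α β n : ℝ) * P α β k ≤ (Aa α β (k+1) : ℝ) * n := by exact_mod_cast hnat
      have hkey := peakr_ub' h0 hαβ h1 (α := α) (β := β) hk
      have hstep : (cnt α β n : ℝ) * P α β k ≤ (β + 2/k) * n * P α β k := by
        calc (cnt α β n : ℝ) * P α β k ≤ (Aa α β (k+1) : ℝ) * n := hnatR
          _ ≤ ((β + 2/k) * P α β k) * n := mul_le_mul_of_nonneg_right hkey hnnn
          _ = (β + 2/k) * n * P α β k := by ring
      exact le_of_mul_le_mul_right hstep hPpos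
  · -- flat
    have hcnt : cnt α β n = Aa α β (k+1) := by
      rw [cnt_flat k n hcase.le hn2.le, cnt_P]
    rw [hcnt]
    constructor
    · rcases le_or_gt (α - 2/k) 0 with hneg | hpos
      · exact le_trans (mul_nonpos_of_nonpos_of_nonneg hneg hnnn) (Nat.cast_nonneg _)
      · have hkey := key_lb' h0 hαβ h1 (α := α) (β := β) (k := k+1) (by omega)
        have h2k : (2:ℝ)/((k:ℝ)+1) ≤ 2/k :=
          div_le_div_of_nonneg_left (by norm_num) hkR (by linarith)
        have hc : ((k+1 : ℕ) : ℝ) = (k:ℝ)+1 := by push_cast; ring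
        rw [hc] at hkey
        calc (α - 2/k) * n ≤ (α - 2/k) * V α β (k+1) := by
              apply mul_le_mul_of_nonneg_left _ hpos.le
              exact_mod_cast hn2.le
          _ ≤ (α - 2/((k:ℝ)+1)) * V α β (k+1) :=
              mul_le_mul_of_nonneg_right (by linarith) (Nat.cast_nonneg _)
          _ ≤ (Aa α β (k+1) : ℝ) := hkey
    · have hkey := peakr_ub' h0 hαβ h1 (α := α) (β := β) hk
      calc (Aa α β (k+1) : ℝ) ≤ (β + 2/k) * P α β k := hkey
        _ ≤ (β + 2/k) * n := by
            apply mul_le_mul_of_nonneg_left _ (by positivity)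
            exact_mod_cast hcase.le
  
lemma cnt_eventually {ε : ℝ} (hε : 0 < ε) :
    ∃ N, ∀ n, N ≤ n → (α - ε) * n ≤ (cnt α β n : ℝ) ∧ (cnt α β n : ℝ) ≤ (β + ε) * n := by
  obtain ⟨K, hK⟩ := exists_nat_ge (2/ε)
  set K' := K + 1 with hK'
  have hK'1 : 1 ≤ K' := by omega
  have hK'R : (0:ℝ) < K' := by positivity
  have h2K : 2/(K':ℝ) ≤ ε := by
    rw [div_le_iff₀ hK'R]
    have : 2/ε ≤ (K':ℝ) := by rw [hK']; push_cast; linarith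
    rw [div_le_iff₀ hε] at this
    linarith
  refine ⟨V α β K', fun n hn => ?_⟩
  obtain ⟨k, hkK, hk1, hk2⟩ := exists_block (α := α) (β := β) hn
  have hk1' : 1 ≤ k := le_trans hK'1 hkK
  have hkRk : (0:ℝ) < (k:ℝ) := by exact_mod_cast hk1'
  have h2k : 2/(k:ℝ) ≤ 2/(K':ℝ) :=
    div_le_div_of_nonneg_left (by norm_num) hK'R (by exact_mod_cast hkK)
  obtain ⟨hb1, hb2⟩ := block_bounds h0 hαβ h1 hk1' hk1 hk2
  have hnnn : (0:ℝ) ≤ (n:ℝ) := Nat.cast_nonneg _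
  constructor
  · calc (α - ε) * n ≤ (α - 2/k) * n :=
        mul_le_mul_of_nonneg_right (by linarith) hnnn
      _ ≤ (cnt α β n : ℝ) := hb1
  · calc (cnt α β n : ℝ) ≤ (β + 2/k) * n := hb2
      _ ≤ (β + ε) * n := mul_le_mul_of_nonneg_right (by linarith) hnnn

lemma valley_seq {ε : ℝ} (hε : 0 < ε) :
    ∃ J, ∀ j, J ≤ j → (Aa α β j : ℝ) ≤ (α + ε) * V α β j := by
  obtain ⟨K, hK⟩ := exists_nat_ge (1/ε)
  refine ⟨K + 1, fun j hj => ?_⟩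
  have hj1 : 1 ≤ j := by omega
  have hjR : (0:ℝ) < (j:ℝ) := by exact_mod_cast hj1
  have h1j : 1/(j:ℝ) ≤ ε := by
    rw [div_le_iff₀ hjR]
    have h2 : 1/ε ≤ (j:ℝ) := le_trans hK (by exact_mod_cast (by omega : K ≤ j))
    rw [div_le_iff₀ hε] at h2
    linarith
  calc (Aa α β j : ℝ) ≤ (α + 1/j) * V α β j := key_ub' h0 hαβ h1 hj1
    _ ≤ (α + ε) * V α β j := mul_le_mul_of_nonneg_right (by linarith) (Nat.cast_nonneg _)

lemma peak_seq {ε : ℝ} (hε : 0 < ε) :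
    ∃ J, ∀ j, J ≤ j → (β - ε) * P α β j ≤ (Aa α β (j+1) : ℝ) := by
  obtain ⟨K, hK⟩ := exists_nat_ge (1/ε)
  refine ⟨K, fun j hj => ?_⟩
  have hjR : (0:ℝ) < (j:ℝ)+1 := by positivity
  have h1j : 1/((j:ℝ)+1) ≤ ε := by
    rw [div_le_iff₀ hjR]
    have hKj : (K:ℝ) ≤ (j:ℝ) := by exact_mod_cast hj
    have h2 : 1/ε ≤ (j:ℝ)+1 := le_trans hK (by linarith)
    rw [div_le_iff₀ hε] at h2
    linarith
  calc (β - ε) * P α β j ≤ (β - 1/((j:ℝ)+1)) * P α β j :=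
      mul_le_mul_of_nonneg_right (by linarith) (Nat.cast_nonneg _)
    _ ≤ (Aa α β (j+1) : ℝ) := peakr_lb h0 hαβ h1 j

lemma cnt_unbounded (hα : 0 < α) (k : ℕ) : ∃ m, k ≤ cnt α β m := by
  obtain ⟨N, hN⟩ := cnt_eventually h0 hαβ h1 (α := α) (β := β) (half_pos hα)
  obtain ⟨M, hM⟩ := exists_nat_ge ((k:ℝ) / (α/2))
  refine ⟨max N M, ?_⟩
  have h1 := (hN (max N M) (le_max_left _ _)).1
  have hMle : (M:ℝ) ≤ (max N M : ℕ) := by exact_mod_cast le_max_right N M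
  have hk : (k:ℝ) ≤ (α/2) * (max N M : ℕ) := by
    rw [div_le_iff₀ (half_pos hα)] at hM
    nlinarith [half_pos hα]
  have : (k:ℝ) ≤ (cnt α β (max N M) : ℝ) := by
    have : α - α/2 = α/2 := by ring
    rw [this] at h1
    linarith
  exact_mod_cast this

end Blocks

lemma cantorDist_nonneg (x y : ℕ → ZMod 2) : 0 ≤ cantorDist x y := by
  rw [cantorDist]
  split_ifs with h
  · positivity
  · exact le_refl 0

lemma cantorDist_le_one (x y : ℕ → ZMod 2) : cantorDist x y ≤ 1 := by
  rw [cantorDist]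
  split_ifs with h
  · exact pow_le_one₀ (by norm_num) (by norm_num)
  · norm_num

lemma cantorDist_le_pow {x y : ℕ → ZMod 2} {m : ℕ} (h : ∀ n, n < m → x n = y n) :
    cantorDist x y ≤ (2:ℝ)⁻¹ ^ m := by
  rw [cantorDist]
  split_ifs with hd
  · apply pow_le_pow_of_le_one (by norm_num) (by norm_num)
    by_contra hc
    push_neg at hc
    exact (Nat.find_spec hd) (h _ hc)
  · positivity

lemma pow_le_cantorDist {x y : ℕ → ZMod 2} {k : ℕ} (h : x k ≠ y k) :
    (2:ℝ)⁻¹ ^ k ≤ cantorDist x y := by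
  rw [cantorDist, dif_pos ⟨k, h⟩]
  exact pow_le_pow_of_le_one (by norm_num) (by norm_num) (Nat.find_min' _ h)

lemma agree_of_cantorDist_le {x y : ℕ → ZMod 2} {m n : ℕ}
    (h : cantorDist x y ≤ (2:ℝ)⁻¹ ^ m) (hn : n < m) : x n = y n := by
  by_contra hc
  have h1 := pow_le_cantorDist hc
  have h2 : (2:ℝ)⁻¹ ^ m < (2:ℝ)⁻¹ ^ n :=
    pow_lt_pow_right_of_lt_one₀ (by norm_num) (by norm_num) hn
  linarith

lemma cantorDist_collapse {x y : ℕ → ZMod 2} {m : ℕ}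
    (h : cantorDist x y < (2:ℝ)⁻¹ ^ m) : cantorDist x y ≤ (2:ℝ)⁻¹ ^ (m+1) := by
  apply cantorDist_le_pow
  intro n hn
  rcases Nat.lt_or_ge n m with h1 | h1
  · exact agree_of_cantorDist_le h.le h1
  · have hnm : n = m := by omega
    subst hnm
    by_contra hc
    exact absurd h (not_lt.2 (pow_le_cantorDist hc))

/-! ### the metric side -/

section Metric0
variable {X : Type*} [MetricSpace X] {φ : (ℕ → ZMod 2) → X}
  (hbij : Function.Bijective φ)
  (hdist : ∀ x y : ℕ → ZMod 2, dist (φ x) (φ y) = cantorDist x y)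

include hbij hdist in
lemma dist_le_one' (p q : X) : dist p q ≤ 1 := by
  obtain ⟨x, rfl⟩ := hbij.2 p
  obtain ⟨y, rfl⟩ := hbij.2 q
  rw [hdist]
  exact cantorDist_le_one x y

include hbij hdist in
lemma isClosed_image_UR (R : Set ℕ) : IsClosed (φ '' UR R) := by
  apply isClosed_of_closure_subset
  intro y hy
  obtain ⟨x, rfl⟩ := hbij.2 y
  refine ⟨x, fun n hn => ?_, rfl⟩
  obtain ⟨b, hb, hd⟩ := Metric.mem_closure_iff.1 hy ((2:ℝ)⁻¹^(n+1)) (by positivity)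
  obtain ⟨u, hu, rfl⟩ := hb
  rw [hdist] at hd
  have := agree_of_cantorDist_le hd.le (Nat.lt_succ_self n)
  rw [this]
  exact hu n hn

include hdist in
lemma continuous_phi : Continuous φ := by
  rw [continuous_iff_continuousAt]
  intro x
  rw [ContinuousAt, Metric.tendsto_nhds]
  intro ε hε
  obtain ⟨m, hm⟩ : ∃ m : ℕ, (2:ℝ)⁻¹^m < ε := exists_pow_lt_of_lt_one hε (by norm_num)
  have hopen : IsOpen {y : ℕ → ZMod 2 | ∀ n, n < m → y n = x n} := by
    have heq : {y : ℕ → ZMod 2 | ∀ n, n < m → y n = x n}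
        = ⋂ n ∈ Finset.range m, (fun y : ℕ → ZMod 2 => y n) ⁻¹' {x n} := by
      ext y; simp [Finset.mem_range]
    rw [heq]
    exact isOpen_biInter_finset fun n _ =>
      (continuous_apply n).isOpen_preimage _ (isOpen_discrete _)
  have hmem : {y : ℕ → ZMod 2 | ∀ n, n < m → y n = x n} ∈ nhds x :=
    hopen.mem_nhds (by simp)
  filter_upwards [hmem] with y hy
  rw [hdist]
  calc cantorDist y x ≤ (2:ℝ)⁻¹^m := cantorDist_le_pow hy
    _ < ε := hm

include hbij hdist in
lemma separable_X : TopologicalSpace.SeparableSpace X := by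
  refine ⟨⟨φ '' {x | ∃ m, ∀ n, m ≤ n → x n = 0}, ?_, ?_⟩⟩
  · apply Set.Countable.image
    have : {x : ℕ → ZMod 2 | ∃ m, ∀ n, m ≤ n → x n = 0}
        = ⋃ m : ℕ, {x : ℕ → ZMod 2 | ∀ n, m ≤ n → x n = 0} := by       ext x; simp
    rw [this]
    apply Set.countable_iUnion
    intro m
    apply Set.Countable.mono _ (Set.countable_range
      (fun σ : Fin m → ZMod 2 => (fun n => if h : n < m then σ ⟨n, h⟩ else 0 : ℕ → ZMod 2)))
    intro x hx
    refine ⟨fun i => x i, funext fun n => ?_⟩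
    by_cases h : n < m
    · simp [h]
    · simp only [dif_neg h]
      exact (hx n (by omega)).symm
  · rw [Metric.dense_iff]
    intro p r hr
    obtain ⟨x, rfl⟩ := hbij.2 p
    obtain ⟨m, hm⟩ : ∃ m : ℕ, (2:ℝ)⁻¹^m < r := exists_pow_lt_of_lt_one hr (by norm_num)
    refine ⟨φ (fun n => if n < m then x n else 0), ?_, ?_⟩
    · rw [Metric.mem_ball, dist_comm, hdist]
      calc cantorDist x (fun n => if n < m then x n else 0) ≤ (2:ℝ)⁻¹^m := by
            apply cantorDist_le_pow
            intro n hn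
            simp [hn]
        _ < r := hm
    · exact ⟨_, ⟨m, fun n hn => by simp [Nat.not_lt.2 hn]⟩, rfl⟩

end Metric0

/-! ### cylinders and the Haar measure -/

noncomputable def fsb (α β : ℝ) (m : ℕ) : Finset ℕ :=
  (Finset.range m).filter (fun i => i ∈ Rset α β)

lemma fsb_card (α β : ℝ) (m : ℕ) : (fsb α β m).card = cnt α β m := rfl

lemma mem_fsb {α β : ℝ} {m n : ℕ} : n ∈ fsb α β m ↔ n < m ∧ n ∈ Rset α β := by
  simp [fsb, Finset.mem_filter, Finset.mem_range]

noncomputable def Fσ (α β : ℝ) (m : ℕ) (σ : {i // i ∈ fsb α β m} → ZMod 2) : ℕ → ZMod 2 :=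
  fun n => if h : n ∈ fsb α β m then σ ⟨n, h⟩ else 0

lemma Fσ_mem (α β : ℝ) (m : ℕ) (σ : {i // i ∈ fsb α β m} → ZMod 2) :
    Fσ α β m σ ∈ UR (Rset α β) := by
  intro n hn
  rw [Fσ, dif_neg]
  intro hmem
  exact hn (mem_fsb.1 hmem).2

lemma Fσ_agree {α β : ℝ} {m : ℕ} {x : ℕ → ZMod 2} (hx : x ∈ UR (Rset α β))
    {n : ℕ} (hn : n < m) : x n = Fσ α β m (fun i => x i) n := by
  rw [Fσ]
  split_ifs with h
  · rfl
  · have : n ∉ Rset α β := fun hR => h (mem_fsb.2 ⟨hn, hR⟩)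
    exact hx n this

lemma Fσ_inj (α β : ℝ) (m : ℕ) : Function.Injective (Fσ α β m) := by
  intro σ τ h
  funext i
  have := congrFun h i.1
  rw [Fσ, Fσ, dif_pos i.2, dif_pos i.2] at this
  exact this

lemma card_fun_fsb (α β : ℝ) (m : ℕ) :
    Fintype.card ({i // i ∈ fsb α β m} → ZMod 2) = 2 ^ cnt α β m := by
  rw [Fintype.card_fun, ZMod.card, Fintype.card_coe, fsb_card]

/-- cylinders in the Cantor group -/
def Cyl (s : Finset ℕ) (c : ℕ → ZMod 2) : Set (ℕ → ZMod 2) := {y | ∀ n ∈ s, y n = c n}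

lemma Cyl_measurable (s : Finset ℕ) (c : ℕ → ZMod 2) : MeasurableSet (Cyl s c) := by
  have : Cyl s c = ⋂ n ∈ s, (fun y : ℕ → ZMod 2 => y n) ⁻¹' {c n} := by
    ext y; simp [Cyl]
  rw [this]
  exact MeasurableSet.biInter (Set.to_countable _)
    (fun n _ => (measurable_pi_apply n) (measurableSet_singleton _))

noncomputable def μ0 : Measure (ℕ → ZMod 2) := Measure.addHaarMeasure ⊤

instance : μ0.IsAddLeftInvariant := by unfold μ0; infer_instance

lemma μ0_univ : μ0 Set.univ = 1 := by
  have := Measure.addHaarMeasure_self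
    (K₀ := (⊤ : TopologicalSpace.PositiveCompacts (ℕ → ZMod 2)))
  rwa [TopologicalSpace.PositiveCompacts.coe_top] at this

lemma μ0_Cyl_eq (s : Finset ℕ) (c c' : ℕ → ZMod 2) : μ0 (Cyl s c) = μ0 (Cyl s c') := by
  have hpre : Cyl s c' = (fun y => (fun n => c n - c' n) + y) ⁻¹' (Cyl s c) := by
    ext y
    simp only [Cyl, Set.mem_preimage, Set.mem_setOf_eq, Pi.add_apply]
    constructor
    · intro h n hn; rw [h n hn]; ring
    · intro h n hn
      have := h n hn
      linear_combination this
  rw [hpre, measure_preimage_add]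

lemma μ0_Cyl (s : Finset ℕ) (c : ℕ → ZMod 2) :
    μ0 (Cyl s c) = (2:ℝ≥0∞)⁻¹ ^ s.card := by
  classical
  set ext : ({i // i ∈ s} → ZMod 2) → (ℕ → ZMod 2) :=
    fun σ n => if h : n ∈ s then σ ⟨n, h⟩ else 0 with hext
  have hcover : (Set.univ : Set (ℕ → ZMod 2)) = ⋃ σ, Cyl s (ext σ) := by
    ext y
    simp only [Set.mem_univ, Set.mem_iUnion, true_iff]
    refine ⟨fun i => y i, fun n hn => ?_⟩
    rw [hext]; simp [hn]
  have hdisj : Pairwise (Function.onFun Disjoint (fun σ => Cyl s (ext σ))) := by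
    intro σ τ hστ
    rw [Function.onFun, Set.disjoint_left]
    intro y hy1 hy2
    apply hστ
    funext i
    have e1 := hy1 i.1 i.2
    have e2 := hy2 i.1 i.2
    rw [hext] at e1 e2
    simp only [dif_pos i.2] at e1 e2
    rw [← e1, ← e2]
  have hmeas : ∀ σ : {i // i ∈ s} → ZMod 2, MeasurableSet (Cyl s (ext σ)) :=
    fun σ => Cyl_measurable s (ext σ)
  have hsum : μ0 Set.univ = ∑' σ : {i // i ∈ s} → ZMod 2, μ0 (Cyl s (ext σ)) := by
    rw [hcover, measure_iUnion hdisj hmeas]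
  have hconst : ∀ σ : {i // i ∈ s} → ZMod 2, μ0 (Cyl s (ext σ)) = μ0 (Cyl s c) :=
    fun σ => μ0_Cyl_eq s (ext σ) c
  rw [μ0_univ] at hsum
  rw [tsum_congr hconst, tsum_fintype, Finset.sum_const, Finset.card_univ] at hsum
  have hcard : Fintype.card ({i // i ∈ s} → ZMod 2) = 2 ^ s.card := by
    rw [Fintype.card_fun, ZMod.card, Fintype.card_coe]
  rw [hcard] at hsum
  have h2' : ((2:ℝ≥0∞) ^ s.card) * μ0 (Cyl s c) = 1 := by
    have h := hsum.symm
    rw [nsmul_eq_mul] at h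
    push_cast at h
    exact h
  rw [← ENNReal.inv_pow]
  rw [← one_mul ((2:ℝ≥0∞)^s.card)⁻¹]
  rw [← h2']
  rw [mul_comm ((2:ℝ≥0∞) ^ s.card) (μ0 (Cyl s c)), mul_assoc,
    ENNReal.mul_inv_cancel (by positivity) (ENNReal.pow_ne_top ENNReal.ofNat_ne_top), mul_one]

/-! ### the pushforward measure on X -/

noncomputable def θm (α β : ℝ) : (ℕ → ZMod 2) → (ℕ → ZMod 2) :=
  fun y n => if n ∈ Rset α β then y n else 0

lemma θm_measurable (α β : ℝ) : Measurable (θm α β) := by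
  apply measurable_pi_lambda
  intro n
  by_cases h : n ∈ Rset α β
  · simpa [θm, h] using measurable_pi_apply n
  · simpa [θm, h] using measurable_const

lemma θm_mem (α β : ℝ) (y : ℕ → ZMod 2) : θm α β y ∈ UR (Rset α β) :=
  fun n hn => by simp [θm, hn]

lemma θm_agree {α β : ℝ} {n : ℕ} (hn : n ∈ Rset α β) (y : ℕ → ZMod 2) :
    θm α β y n = y n := by simp [θm, hn]

section MeasureX
variable {X : Type*} [MetricSpace X] [MeasurableSpace X] [BorelSpace X]
  {φ : (ℕ → ZMod 2) → X}
  (hbij : Function.Bijective φ)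
  (hdist : ∀ x y : ℕ → ZMod 2, dist (φ x) (φ y) = cantorDist x y)
  (α β : ℝ)

noncomputable def μX (φ : (ℕ → ZMod 2) → X) (α β : ℝ) : Measure X :=
  μ0.map (φ ∘ θm α β)

include hdist in
lemma μX_apply {t : Set X} (ht : MeasurableSet t) :
    μX φ α β t = μ0 ((φ ∘ θm α β) ⁻¹' t) := by
  apply Measure.map_apply _ ht
  exact ((continuous_phi hdist).measurable).comp (θm_measurable α β)

include hdist in
lemma μX_univ : μX φ α β Set.univ = 1 := by
  rw [μX_apply hdist α β MeasurableSet.univ, Set.preimage_univ, μ0_univ]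

include hbij hdist in
lemma μX_image : μX φ α β (φ '' UR (Rset α β)) = 1 := by
  rw [μX_apply hdist α β (isClosed_image_UR hbij hdist _).measurableSet]
  have : (φ ∘ θm α β) ⁻¹' (φ '' UR (Rset α β)) = Set.univ := by
    ext y
    simp only [Set.mem_preimage, Set.mem_univ, iff_true, Function.comp_apply]
    exact ⟨θm α β y, θm_mem α β y, rfl⟩
  rw [this, μ0_univ]

include hdist in
lemma μX_closedBall (z : ℕ → ZMod 2) (m : ℕ) :
    μX φ α β (Metric.closedBall (φ z) ((2:ℝ)⁻¹^m)) ≤ (2:ℝ≥0∞)⁻¹ ^ cnt α β m := by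
  rw [μX_apply hdist α β measurableSet_closedBall]
  have hsub : (φ ∘ θm α β) ⁻¹' (Metric.closedBall (φ z) ((2:ℝ)⁻¹^m))
      ⊆ Cyl (fsb α β m) z := by
    intro y hy
    simp only [Set.mem_preimage, Metric.mem_closedBall, Function.comp_apply] at hy
    rw [hdist] at hy
    intro n hn
    obtain ⟨hnm, hnR⟩ := mem_fsb.1 hn
    have := agree_of_cantorDist_le hy hnm
    rw [← θm_agree hnR y]
    exact this
  calc μ0 _ ≤ μ0 (Cyl (fsb α β m) z) := measure_mono hsub
    _ = (2:ℝ≥0∞)⁻¹ ^ (fsb α β m).card := μ0_Cyl _ _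
    _ = (2:ℝ≥0∞)⁻¹ ^ cnt α β m := by rw [fsb_card]

include hbij hdist in
lemma μX_set_le {t : Set X} {m : ℕ} (ht : ∀ p ∈ t, ∀ q ∈ t, dist p q ≤ (2:ℝ)⁻¹^m) :
    μX φ α β t ≤ (2:ℝ≥0∞)⁻¹ ^ cnt α β m := by
  rcases t.eq_empty_or_nonempty with rfl | ⟨p, hp⟩
  · simp
  · obtain ⟨z, rfl⟩ := hbij.2 p
    have hsub : t ⊆ Metric.closedBall (φ z) ((2:ℝ)⁻¹^m) := by
      intro q hq
      rw [Metric.mem_closedBall]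
      exact ht q hq _ hp
    exact le_trans (measure_mono hsub) (μX_closedBall hdist α β z m)

include hbij hdist in
lemma μX_set_le_of_diam_lt {t : Set X} {a : ℝ} {m : ℕ}
    (h1 : Metric.diam t ≤ a) (h2 : a < (2:ℝ)⁻¹^m) :
    μX φ α β t ≤ (2:ℝ≥0∞)⁻¹ ^ cnt α β (m+1) := by
  apply μX_set_le hbij hdist
  intro p hp q hq
  obtain ⟨x, rfl⟩ := hbij.2 p
  obtain ⟨y, rfl⟩ := hbij.2 q
  have hbdd : Bornology.IsBounded t :=
    Bornology.IsBounded.subset (Metric.isBounded_closedBall (x := φ x) (r := 1))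
      (fun w hw => Metric.mem_closedBall.2 (by rw [dist_comm]; exact dist_le_one' hbij hdist _ _))
  have hd : dist (φ x) (φ y) < (2:ℝ)⁻¹^m :=
    lt_of_le_of_lt (le_trans (Metric.dist_le_diam_of_mem hbdd hp hq) h1) h2
  rw [hdist] at hd ⊢
  exact cantorDist_collapse hd

include hbij hdist in
lemma μX_set_le_of_ediam {t : Set X} {m : ℕ}
    (h : EMetric.diam t ≤ ENNReal.ofReal ((2:ℝ)⁻¹^m)) :
    μX φ α β t ≤ (2:ℝ≥0∞)⁻¹ ^ cnt α β m := by
  apply μX_set_le hbij hdist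
  intro p hp q hq
  have he : edist p q ≤ ENNReal.ofReal ((2:ℝ)⁻¹^m) := le_trans (EMetric.edist_le_diam_of_mem hp hq) h
  rw [edist_dist] at he
  exact (ENNReal.ofReal_le_ofReal_iff (by positivity)).1 he

lemma ennreal_eq_zero_of_le_pow {c : ℝ≥0∞} (h : ∀ k : ℕ, c ≤ (2:ℝ≥0∞)⁻¹^k) : c = 0 := by
  by_contra hc
  have hinv : ∀ k : ℕ, (2:ℝ≥0∞)^k ≤ c⁻¹ := by
    intro k
    have h2 := h k
    rw [← ENNReal.inv_pow] at h2
    rw [← ENNReal.inv_le_inv] at h2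
    simpa using h2
  have htop : c⁻¹ = ⊤ := by
    by_contra ht
    obtain ⟨n, hn⟩ := ENNReal.exists_nat_gt ht
    have h2 : (n:ℝ≥0∞) ≤ (2:ℝ≥0∞)^n := by
      have hnat : (n:ℕ) ≤ 2^n := (Nat.lt_two_pow_self (n := n)).le
      calc (n:ℝ≥0∞) ≤ ((2^n : ℕ) : ℝ≥0∞) := by exact_mod_cast hnat
        _ = (2:ℝ≥0∞)^n := by push_cast; ring
    exact absurd (le_trans h2 (hinv n)) (not_le.2 hn)
  rw [ENNReal.inv_eq_top] at htop
  exact hc htop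

include hbij hdist in
lemma μX_singleton (h0 : 0 ≤ α) (hαβ : α ≤ β) (h1 : β ≤ 1) (hα : 0 < α) (p : X) :
    μX φ α β {p} = 0 := by
  apply ennreal_eq_zero_of_le_pow
  intro k
  obtain ⟨m, hm⟩ := cnt_unbounded h0 hαβ h1 (α := α) (β := β) hα k
  have h2 : μX φ α β {p} ≤ (2:ℝ≥0∞)⁻¹ ^ cnt α β m := by
    apply μX_set_le hbij hdist
    rintro q rfl q' rfl
    simp only [dist_self]
    positivity
  calc μX φ α β {p} ≤ (2:ℝ≥0∞)⁻¹ ^ cnt α β m := h2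
    _ ≤ (2:ℝ≥0∞)⁻¹ ^ k := by
        rw [← ENNReal.inv_pow, ← ENNReal.inv_pow, ENNReal.inv_le_inv]
        exact pow_le_pow_right₀ (by norm_num) hm

end MeasureX

section Cover
variable {X : Type*} [MetricSpace X] [MeasurableSpace X] [BorelSpace X]
  {φ : (ℕ → ZMod 2) → X}
  (hbij : Function.Bijective φ)
  (hdist : ∀ x y : ℕ → ZMod 2, dist (φ x) (φ y) = cantorDist x y)
  (α β : ℝ)

include hbij hdist in
lemma coverNum_mem {m : ℕ} {a : ℝ} (ha1 : (2:ℝ)⁻¹^m ≤ a) :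
    (2 : ℕ) ^ cnt α β m ∈ {k : ℕ | ∃ 𝒞 : Finset (Set X), 𝒞.card = k ∧
      (∀ E ∈ 𝒞, Metric.diam E ≤ a) ∧ φ '' UR (Rset α β) ⊆ ⋃ E ∈ 𝒞, E} := by
  classical
  set pc : ({i // i ∈ fsb α β m} → ZMod 2) → Set X :=
    fun σ => φ '' {x | x ∈ UR (Rset α β) ∧ ∀ n, n < m → x n = Fσ α β m σ n} with hpc
  have hinj : Function.Injective pc := by
    intro σ τ hστ
    have hmem : φ (Fσ α β m σ) ∈ pc σ :=
      ⟨Fσ α β m σ, ⟨Fσ_mem α β m σ, fun n _ => rfl⟩, rfl⟩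
    rw [hστ] at hmem
    obtain ⟨x, ⟨hxU, hxa⟩, hxe⟩ := hmem
    have hxeq : x = Fσ α β m σ := hbij.1 hxe
    subst hxeq
    funext i
    have h1 : Fσ α β m σ i.1 = Fσ α β m τ i.1 := hxa i.1 (mem_fsb.1 i.2).1
    rw [Fσ, Fσ, dif_pos i.2, dif_pos i.2] at h1
    exact h1
  refine ⟨Finset.image pc Finset.univ, ?_, ?_, ?_⟩
  · rw [Finset.card_image_of_injective _ hinj, Finset.card_univ, card_fun_fsb]
  · intro E hE
    obtain ⟨σ, _, rfl⟩ := Finset.mem_image.1 hE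
    apply Metric.diam_le_of_forall_dist_le (le_trans (by positivity) ha1)
    rintro p ⟨x, ⟨hxU, hxa⟩, rfl⟩ q ⟨y, ⟨hyU, hya⟩, rfl⟩
    rw [hdist]
    refine le_trans (cantorDist_le_pow fun n hn => ?_) ha1
    rw [hxa n hn, hya n hn]
  · rintro p ⟨u, hu, rfl⟩
    rw [Set.mem_iUnion₂]
    refine ⟨pc (fun i => u i.1), Finset.mem_image.2 ⟨_, Finset.mem_univ _, rfl⟩,
      u, ⟨hu, fun n hn => Fσ_agree hu hn⟩, rfl⟩

include hbij hdist in
lemma coverNum_eq {m : ℕ} (hm : 1 ≤ m) {a : ℝ}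
    (ha1 : (2:ℝ)⁻¹^m ≤ a) (ha2 : a < (2:ℝ)⁻¹^(m-1)) :
    coverNum (φ '' UR (Rset α β)) a = 2 ^ cnt α β m := by
  apply le_antisymm
  · exact Nat.sInf_le (coverNum_mem hbij hdist α β ha1)
  · apply le_csInf ⟨_, coverNum_mem hbij hdist α β ha1⟩
    rintro k ⟨𝒞, rfl, hdiam, hcov⟩
    have hone : (1:ℝ≥0∞) ≤ 𝒞.card • ((2:ℝ≥0∞)⁻¹ ^ cnt α β m) := by
      calc (1:ℝ≥0∞) = μX φ α β (φ '' UR (Rset α β)) := (μX_image hbij hdist α β).symm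
        _ ≤ μX φ α β (⋃ E ∈ 𝒞, E) := measure_mono hcov
        _ ≤ ∑ E ∈ 𝒞, μX φ α β E := measure_biUnion_finset_le _ _
        _ ≤ 𝒞.card • ((2:ℝ≥0∞)⁻¹ ^ cnt α β m) := by
            apply Finset.sum_le_card_nsmul
            intro E hE
            have h2 := μX_set_le_of_diam_lt hbij hdist α β (hdiam E hE) ha2
            have hm1 : m - 1 + 1 = m := by omega
            rwa [hm1] at h2
    have h2c : ((2:ℝ≥0∞)) ^ cnt α β m ≤ (𝒞.card : ℝ≥0∞) := by
      have hmul := mul_le_mul_right hone ((2:ℝ≥0∞) ^ cnt α β m)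
      rw [mul_one] at hmul
      calc ((2:ℝ≥0∞)) ^ cnt α β m ≤ (2:ℝ≥0∞) ^ cnt α β m * (𝒞.card • ((2:ℝ≥0∞)⁻¹ ^ cnt α β m)) := hmul
        _ = (𝒞.card : ℝ≥0∞) * ((2:ℝ≥0∞) ^ cnt α β m * (2:ℝ≥0∞)⁻¹ ^ cnt α β m) := by
            rw [nsmul_eq_mul]; ring
        _ = (𝒞.card : ℝ≥0∞) := by
            rw [← ENNReal.inv_pow, ENNReal.mul_inv_cancel (by positivity)
              (ENNReal.pow_ne_top ENNReal.ofNat_ne_top), mul_one]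
    have : ((2 ^ cnt α β m : ℕ) : ℝ≥0∞) ≤ (𝒞.card : ℝ≥0∞) := by
      push_cast
      exact h2c
    exact_mod_cast this

end Cover

lemma exists_scale {a : ℝ} (h0 : 0 < a) (h1 : a < 1) :
    ∃ m : ℕ, (2:ℝ)⁻¹^(m+1) ≤ a ∧ a < (2:ℝ)⁻¹^m := by
  have hex : ∃ k : ℕ, (2:ℝ)⁻¹^k ≤ a := by
    obtain ⟨k, hk⟩ := exists_pow_lt_of_lt_one h0 (by norm_num : (2:ℝ)⁻¹ < 1)
    exact ⟨k, hk.le⟩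
  set k := Nat.find hex with hk
  have hspec : (2:ℝ)⁻¹^k ≤ a := Nat.find_spec hex
  have hk1 : 1 ≤ k := by
    by_contra h
    push_neg at h
    interval_cases k
    · simp at hspec; linarith
  refine ⟨k - 1, ?_, ?_⟩
  · have : k - 1 + 1 = k := by omega
    rw [this]; exact hspec
  · have := Nat.find_min hex (m := k - 1) (by omega)
    push_neg at this
    exact this

section BoxDim
variable {X : Type*} [MetricSpace X] [MeasurableSpace X] [BorelSpace X]
  {φ : (ℕ → ZMod 2) → X}
  (hbij : Function.Bijective φ)
  (hdist : ∀ x y : ℕ → ZMod 2, dist (φ x) (φ y) = cantorDist x y)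
  {α β : ℝ} (h0 : 0 ≤ α) (hαβ : α ≤ β) (h1 : β ≤ 1)

include hbij hdist h0 hαβ h1

lemma F_le_of_scale {m : ℕ} {a : ℝ} (ha0 : 0 < a)
    (ha1 : (2:ℝ)⁻¹^(m+1) ≤ a) (ha2 : a < (2:ℝ)⁻¹^m) (hm : 1 ≤ m) :
    Real.log (coverNum (φ '' UR (Rset α β)) a) / Real.log (1/a)
      ≤ (cnt α β (m+1) : ℝ) / m := by
  have hcov : coverNum (φ '' UR (Rset α β)) a = 2 ^ cnt α β (m+1) :=
    coverNum_eq hbij hdist α β (by omega) ha1 (by simpa using ha2)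
  have hlog2 : (0:ℝ) < Real.log 2 := Real.log_pos (by norm_num)
  have hL : (m:ℝ) * Real.log 2 < Real.log (1/a) := by
    have h2m : (1:ℝ)/a > 2^m := by
      rw [gt_iff_lt, lt_div_iff₀ ha0]
      calc (2:ℝ)^m * a < (2:ℝ)^m * (2:ℝ)⁻¹^m :=
            mul_lt_mul_of_pos_left ha2 (by positivity)
        _ = 1 := by rw [← mul_pow]; norm_num
    calc (m:ℝ) * Real.log 2 = Real.log ((2:ℝ)^m) := by rw [Real.log_pow]
      _ < Real.log (1/a) := Real.log_lt_log (by positivity) h2m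
  have hLpos : (0:ℝ) < Real.log (1/a) := by
    have : (0:ℝ) ≤ (m:ℝ) * Real.log 2 := by positivity
    linarith
  have hnum : Real.log (coverNum (φ '' UR (Rset α β)) a)
      = (cnt α β (m+1) : ℝ) * Real.log 2 := by
    rw [hcov]
    push_cast
    rw [Real.log_pow]
  rw [hnum]
  have hmpos : (0:ℝ) < (m:ℝ) := by exact_mod_cast hm
  rw [div_le_div_iff₀ hLpos hmpos]
  have hcnn : (0:ℝ) ≤ (cnt α β (m+1) : ℝ) := Nat.cast_nonneg _
  nlinarith

lemma F_ge_of_scale {m : ℕ} {a : ℝ} (ha0 : 0 < a)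
    (ha1 : (2:ℝ)⁻¹^(m+1) ≤ a) (ha2 : a < (2:ℝ)⁻¹^m) :
    (cnt α β (m+1) : ℝ) / (m+1)
      ≤ Real.log (coverNum (φ '' UR (Rset α β)) a) / Real.log (1/a) := by
  have hcov : coverNum (φ '' UR (Rset α β)) a = 2 ^ cnt α β (m+1) :=
    coverNum_eq hbij hdist α β (by omega) ha1 (by simpa using ha2)
  have hlog2 : (0:ℝ) < Real.log 2 := Real.log_pos (by norm_num)
  have hL2 : Real.log (1/a) ≤ ((m:ℝ)+1) * Real.log 2 := by
    have h2m : (1:ℝ)/a ≤ 2^(m+1) := by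
      rw [div_le_iff₀ ha0]
      calc (1:ℝ) = (2:ℝ)^(m+1) * (2:ℝ)⁻¹^(m+1) := by rw [← mul_pow]; norm_num
        _ ≤ (2:ℝ)^(m+1) * a :=
            mul_le_mul_of_nonneg_left ha1 (by positivity)
    calc Real.log (1/a) ≤ Real.log ((2:ℝ)^(m+1)) := Real.log_le_log (by positivity) h2m
      _ = ((m:ℝ)+1) * Real.log 2 := by rw [Real.log_pow]; push_cast; ring
  have hLpos : (0:ℝ) < Real.log (1/a) := by
    apply Real.log_pos
    rw [lt_div_iff₀ ha0, one_mul]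
    calc a < (2:ℝ)⁻¹^m := ha2
      _ ≤ 1 := pow_le_one₀ (by norm_num) (by norm_num)
  have hnum : Real.log (coverNum (φ '' UR (Rset α β)) a)
      = (cnt α β (m+1) : ℝ) * Real.log 2 := by
    rw [hcov]; push_cast; rw [Real.log_pow]
  rw [hnum]
  have hm1pos : (0:ℝ) < (m:ℝ)+1 := by positivity
  rw [div_le_div_iff₀ hm1pos hLpos]
  have hcnn : (0:ℝ) ≤ (cnt α β (m+1) : ℝ) := Nat.cast_nonneg _
  nlinarith

lemma ev_lower {ε : ℝ} (hε : 0 < ε) :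
    ∀ᶠ a in nhdsWithin (0:ℝ) (Set.Ioi 0),
      α - ε ≤ Real.log (coverNum (φ '' UR (Rset α β)) a) / Real.log (1/a) := by
  obtain ⟨N, hN⟩ := cnt_eventually h0 hαβ h1 (α := α) (β := β) hε
  have hδ : (0:ℝ) < (2:ℝ)⁻¹^(N+1) := by positivity
  filter_upwards [Ioo_mem_nhdsGT_of_mem (Set.mem_Ico.2 ⟨le_refl 0, hδ⟩)] with a ha
  obtain ⟨ha0, haδ⟩ := ha
  have ha1 : a < 1 := lt_of_lt_of_le haδ (pow_le_one₀ (by norm_num) (by norm_num))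
  obtain ⟨m, hm1, hm2⟩ := exists_scale ha0 ha1
  have hmN : N ≤ m + 1 := by
    by_contra h
    push_neg at h
    have : (2:ℝ)⁻¹^(N+1) ≤ (2:ℝ)⁻¹^(m+1) :=
      pow_le_pow_of_le_one (by norm_num) (by norm_num) (by omega)
    linarith
  have hF := F_ge_of_scale hbij hdist h0 hαβ h1 ha0 hm1 hm2
  have hcnt := (hN (m+1) hmN).1
  have hm1pos : (0:ℝ) < (m:ℝ)+1 := by positivity
  have : α - ε ≤ (cnt α β (m+1) : ℝ) / ((m:ℝ)+1) := by
    rw [le_div_iff₀ hm1pos]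
    calc (α - ε) * ((m:ℝ)+1) = (α - ε) * ((m+1 : ℕ) : ℝ) := by push_cast; ring
      _ ≤ (cnt α β (m+1) : ℝ) := hcnt
  exact le_trans this hF

lemma ev_upper {ε : ℝ} (hε : 0 < ε) :
    ∀ᶠ a in nhdsWithin (0:ℝ) (Set.Ioi 0),
      Real.log (coverNum (φ '' UR (Rset α β)) a) / Real.log (1/a) ≤ β + ε := by
  obtain ⟨N, hN⟩ := cnt_eventually h0 hαβ h1 (α := α) (β := β) (half_pos hε)
  obtain ⟨M, hM⟩ := exists_nat_ge ((2*β + ε)/ε)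
  set K := max (max N M) 1 with hK
  have hδ : (0:ℝ) < (2:ℝ)⁻¹^(K+1) := by positivity
  filter_upwards [Ioo_mem_nhdsGT_of_mem (Set.mem_Ico.2 ⟨le_refl 0, hδ⟩)] with a ha
  obtain ⟨ha0, haδ⟩ := ha
  have ha1 : a < 1 := lt_of_lt_of_le haδ (pow_le_one₀ (by norm_num) (by norm_num))
  obtain ⟨m, hm1, hm2⟩ := exists_scale ha0 ha1
  have hmK : K ≤ m := by
    by_contra h
    push_neg at h
    have : (2:ℝ)⁻¹^(K+1) ≤ (2:ℝ)⁻¹^(m+1) :=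
      pow_le_pow_of_le_one (by norm_num) (by norm_num) (by omega)
    linarith
  have hm1' : 1 ≤ m := le_trans (le_max_right _ 1) hmK
  have hF := F_le_of_scale hbij hdist h0 hαβ h1 ha0 hm1 hm2 hm1'
  have hcnt := (hN (m+1) (by
    have : N ≤ K := le_trans (le_max_left _ _) (le_max_left _ 1)
    omega)).2
  have hmpos : (0:ℝ) < (m:ℝ) := by exact_mod_cast hm1'
  have hMm : (2*β + ε)/ε ≤ (m:ℝ) := by
    calc (2*β + ε)/ε ≤ (M:ℝ) := hM
      _ ≤ (m:ℝ) := by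
          have : M ≤ K := le_trans (le_max_right _ _) (le_max_left _ 1)
          exact_mod_cast le_trans this hmK
  have hβ0 : (0:ℝ) ≤ β := le_trans h0 hαβ
  have hstep : (cnt α β (m+1) : ℝ) / m ≤ β + ε := by
    rw [div_le_iff₀ hmpos]
    have h2 : (cnt α β (m+1) : ℝ) ≤ (β + ε/2) * ((m:ℝ)+1) := by
      calc (cnt α β (m+1) : ℝ) ≤ (β + ε/2) * ((m+1:ℕ):ℝ) := hcnt
        _ = (β + ε/2) * ((m:ℝ)+1) := by push_cast; ring
    have h3 : (2*β + ε) ≤ ε * (m:ℝ) := by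
      rw [div_le_iff₀ hε] at hMm
      linarith
    nlinarith
  exact le_trans hF hstep

lemma tendsto_pow_seq (s : ℕ → ℕ) (hs : ∀ j, j + 1 ≤ s j) :
    Tendsto (fun j => (2:ℝ)⁻¹^(s j)) atTop (nhdsWithin (0:ℝ) (Set.Ioi 0)) := by
  rw [tendsto_nhdsWithin_iff]
  constructor
  · have hf : Tendsto (fun j : ℕ => j + 1) atTop atTop := tendsto_add_atTop_nat 1
    have hs' : Tendsto s atTop atTop := tendsto_atTop_mono hs hf
    exact (tendsto_pow_atTop_nhds_zero_of_lt_one (by norm_num) (by norm_num)).comp hs'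
  · exact Eventually.of_forall fun j => Set.mem_Ioi.2 (by positivity)

lemma F_at_pow (m : ℕ) (hm : 1 ≤ m) :
    Real.log (coverNum (φ '' UR (Rset α β)) ((2:ℝ)⁻¹^m)) / Real.log (1/((2:ℝ)⁻¹^m))
      = (cnt α β m : ℝ) / m := by
  have hcov : coverNum (φ '' UR (Rset α β)) ((2:ℝ)⁻¹^m) = 2 ^ cnt α β m := by
    apply coverNum_eq hbij hdist α β hm (le_refl _)
    apply pow_lt_pow_right_of_lt_one₀ (by norm_num) (by norm_num)
    omega
  have hlog2 : (0:ℝ) < Real.log 2 := Real.log_pos (by norm_num)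
  have hL : Real.log (1/((2:ℝ)⁻¹^m)) = (m:ℝ) * Real.log 2 := by
    rw [one_div, ← inv_pow, inv_inv, Real.log_pow]
  have hnum : Real.log ((coverNum (φ '' UR (Rset α β)) ((2:ℝ)⁻¹^m) : ℕ) : ℝ)
      = (cnt α β m : ℝ) * Real.log 2 := by
    rw [hcov]; push_cast; rw [Real.log_pow]
  rw [hnum, hL]
  have hmpos : (0:ℝ) < (m:ℝ) := by exact_mod_cast hm
  field_simp

lemma freq_val {ε : ℝ} (hε : 0 < ε) :
    ∃ᶠ a in nhdsWithin (0:ℝ) (Set.Ioi 0),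
      Real.log (coverNum (φ '' UR (Rset α β)) a) / Real.log (1/a) ≤ α + ε := by
  obtain ⟨J, hJ⟩ := valley_seq h0 hαβ h1 (α := α) (β := β) hε
  apply (tendsto_pow_seq hbij hdist h0 hαβ h1 (V α β) succ_le_V).frequently
  apply Filter.Eventually.frequently
  filter_upwards [eventually_ge_atTop (max J 1)] with j hj
  have hj1 : 1 ≤ V α β j := V_pos j
  rw [F_at_pow hbij hdist h0 hαβ h1 (V α β j) hj1, cnt_V]
  have hVpos : (0:ℝ) < (V α β j : ℝ) := by exact_mod_cast hj1
  rw [div_le_iff₀ hVpos]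
  calc (Aa α β j : ℝ) ≤ (α + ε) * V α β j := hJ j (le_trans (le_max_left _ _) hj)
    _ = (α + ε) * V α β j := rfl

lemma freq_peak {ε : ℝ} (hε : 0 < ε) :
    ∃ᶠ a in nhdsWithin (0:ℝ) (Set.Ioi 0),
      β - ε ≤ Real.log (coverNum (φ '' UR (Rset α β)) a) / Real.log (1/a) := by
  obtain ⟨J, hJ⟩ := peak_seq h0 hαβ h1 (α := α) (β := β) hε
  apply (tendsto_pow_seq hbij hdist h0 hαβ h1 (P α β)
    (fun j => le_trans (succ_le_V j) (V_le_P j))).frequently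
  apply Filter.Eventually.frequently
  filter_upwards [eventually_ge_atTop J] with j hj
  have hj1 : 1 ≤ P α β j := le_trans (V_pos j) (V_le_P j)
  rw [F_at_pow hbij hdist h0 hαβ h1 (P α β j) hj1, cnt_P]
  have hPpos : (0:ℝ) < (P α β j : ℝ) := by exact_mod_cast hj1
  rw [le_div_iff₀ hPpos]
  exact hJ j hj

lemma ev_F_nonneg :
    ∀ᶠ a in nhdsWithin (0:ℝ) (Set.Ioi 0),
      0 ≤ Real.log (coverNum (φ '' UR (Rset α β)) a) / Real.log (1/a) := by
  filter_upwards [Ioo_mem_nhdsGT_of_mem (Set.mem_Ico.2 ⟨le_refl (0:ℝ), one_pos⟩)] with a ha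
  obtain ⟨ha0, ha1⟩ := ha
  apply div_nonneg
  · rcases Nat.eq_zero_or_pos (coverNum (φ '' UR (Rset α β)) a) with h | h
    · rw [h]; simp
    · apply Real.log_nonneg; exact_mod_cast h
  · apply Real.log_nonneg
    rw [le_div_iff₀ ha0, one_mul]
    exact ha1.le

lemma ev_F_le_two :
    ∀ᶠ a in nhdsWithin (0:ℝ) (Set.Ioi 0),
      Real.log (coverNum (φ '' UR (Rset α β)) a) / Real.log (1/a) ≤ 2 := by
  have hδ : (0:ℝ) < (2:ℝ)⁻¹^1 := by norm_num
  filter_upwards [Ioo_mem_nhdsGT_of_mem (Set.mem_Ico.2 ⟨le_refl (0:ℝ), hδ⟩)] with a ha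
  obtain ⟨ha0, haδ⟩ := ha
  have ha1 : a < 1 := lt_of_lt_of_le haδ (by norm_num)
  obtain ⟨m, hm1, hm2⟩ := exists_scale ha0 ha1
  have hm : 1 ≤ m := by
    by_contra h
    push_neg at h
    interval_cases m
    · simp at hm1; linarith
  have hF := F_le_of_scale hbij hdist h0 hαβ h1 ha0 hm1 hm2 hm
  have hmR : (0:ℝ) < (m:ℝ) := by exact_mod_cast hm
  have : (cnt α β (m+1) : ℝ) / m ≤ 2 := by
    rw [div_le_iff₀ hmR]
    have h2 : (cnt α β (m+1) : ℝ) ≤ (m:ℝ) + 1 := by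
      have := cnt_le_self (α := α) (β := β) (m+1)
      exact_mod_cast this
    have h3 : (1:ℝ) ≤ (m:ℝ) := by exact_mod_cast hm
    linarith
  exact le_trans hF this

lemma lowerBoxDim_eq : lowerBoxDim (φ '' UR (Rset α β)) = α := by
  have hFb_le : IsBoundedUnder (· ≤ ·) (nhdsWithin (0:ℝ) (Set.Ioi 0))
      (fun a : ℝ => Real.log (coverNum (φ '' UR (Rset α β)) a) / Real.log (1/a)) :=
    ⟨2, eventually_map.2 (ev_F_le_two hbij hdist h0 hαβ h1)⟩
  have hFb_ge : IsBoundedUnder (· ≥ ·) (nhdsWithin (0:ℝ) (Set.Ioi 0))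
      (fun a : ℝ => Real.log (coverNum (φ '' UR (Rset α β)) a) / Real.log (1/a)) :=
    ⟨0, eventually_map.2 (ev_F_nonneg hbij hdist h0 hαβ h1)⟩
  apply le_antisymm
  · apply le_of_forall_pos_le_add
    intro ε hε
    have h := Filter.liminf_le_of_frequently_le (freq_val hbij hdist h0 hαβ h1 hε) hFb_ge
    rw [lowerBoxDim]
    linarith
  · apply le_of_forall_pos_le_add
    intro ε hε
    have h := Filter.le_liminf_of_le hFb_le.isCoboundedUnder_ge
      (ev_lower hbij hdist h0 hαβ h1 hε)
    rw [lowerBoxDim]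
    linarith

lemma upperBoxDim_eq : upperBoxDim (φ '' UR (Rset α β)) = β := by
  have hFb_le : IsBoundedUnder (· ≤ ·) (nhdsWithin (0:ℝ) (Set.Ioi 0))
      (fun a : ℝ => Real.log (coverNum (φ '' UR (Rset α β)) a) / Real.log (1/a)) :=
    ⟨2, eventually_map.2 (ev_F_le_two hbij hdist h0 hαβ h1)⟩
  have hFb_ge : IsBoundedUnder (· ≥ ·) (nhdsWithin (0:ℝ) (Set.Ioi 0))
      (fun a : ℝ => Real.log (coverNum (φ '' UR (Rset α β)) a) / Real.log (1/a)) :=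
    ⟨0, eventually_map.2 (ev_F_nonneg hbij hdist h0 hαβ h1)⟩
  apply le_antisymm
  · apply le_of_forall_pos_le_add
    intro ε hε
    have h := Filter.limsup_le_of_le hFb_ge.isCoboundedUnder_le
      (ev_upper hbij hdist h0 hαβ h1 hε)
    rw [upperBoxDim]
    linarith
  · apply le_of_forall_pos_le_add
    intro ε hε
    have h := Filter.le_limsup_of_frequently_le (freq_peak hbij hdist h0 hαβ h1 hε) hFb_le
    rw [upperBoxDim]
    linarith

end BoxDim


lemma rpow_helper {c v j : ℕ} {d ε : ℝ} (hε : 0 < ε)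
    (hcv : (c:ℝ) ≤ (d - ε) * v) (hj : (j:ℝ) ≤ (v:ℝ)) :
    (2:ℝ)^c * ((2:ℝ)⁻¹^v)^d ≤ ((2:ℝ)^(-ε))^j := by
  have h2 : ((2:ℝ)⁻¹^v : ℝ) = (2:ℝ)^(-(v:ℝ)) := by
    rw [← Real.rpow_natCast (2:ℝ)⁻¹ v, ← Real.rpow_neg_one (2:ℝ),
      ← Real.rpow_mul (by norm_num : (0:ℝ) ≤ 2)]
    norm_num
  have h3 : (((2:ℝ)^(-(v:ℝ)))^d : ℝ) = (2:ℝ)^(-(v:ℝ)*d) := by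
    rw [← Real.rpow_mul (by norm_num : (0:ℝ) ≤ 2)]
  have h1 : (2:ℝ)^c = (2:ℝ)^((c:ℕ):ℝ) := (Real.rpow_natCast 2 c).symm
  have h4 : ((2:ℝ)^((c:ℝ))) * (2:ℝ)^(-(v:ℝ)*d) = (2:ℝ)^((c:ℝ) + -(v:ℝ)*d) :=
    (Real.rpow_add (by norm_num) _ _).symm
  have h5 : (((2:ℝ)^(-ε))^j : ℝ) = (2:ℝ)^(-ε*(j:ℝ)) := by
    rw [← Real.rpow_natCast ((2:ℝ)^(-ε)) j, ← Real.rpow_mul (by norm_num : (0:ℝ) ≤ 2)]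
  rw [h2, h3, h1, h4, h5]
  apply Real.rpow_le_rpow_of_exponent_le (by norm_num)
  have hεv : ε * (j:ℝ) ≤ ε * (v:ℝ) := mul_le_mul_of_nonneg_left hj hε.le
  nlinarith

/-! ### Hausdorff dimension -/

section Hausdorff
variable {X : Type*} [MetricSpace X] [MeasurableSpace X] [BorelSpace X]
  {φ : (ℕ → ZMod 2) → X}
  (hbij : Function.Bijective φ)
  (hdist : ∀ x y : ℕ → ZMod 2, dist (φ x) (φ y) = cantorDist x y)
  {α β : ℝ} (h0 : 0 ≤ α) (hαβ : α ≤ β) (h1 : β ≤ 1)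

include hbij hdist h0 hαβ h1

lemma hm_zero_of_gt {d : ℝ} (hd : α < d) : μH[d] (φ '' UR (Rset α β)) = 0 := by
  classical
  set s := φ '' UR (Rset α β) with hs
  set t : ∀ j : ℕ, ({i // i ∈ fsb α β (V α β j)} → ZMod 2) → Set X :=
    fun j σ => φ '' {x | x ∈ UR (Rset α β) ∧ ∀ n, n < V α β j → x n = Fσ α β (V α β j) σ n}
    with ht_def
  have hrt : Tendsto (fun j => ENNReal.ofReal ((2:ℝ)⁻¹^(V α β j))) atTop (𝓝 0) := by
    have hreal : Tendsto (fun j => (2:ℝ)⁻¹^(V α β j)) atTop (𝓝 0) :=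
      (tendsto_pow_seq hbij hdist h0 hαβ h1 (V α β) succ_le_V).mono_right nhdsWithin_le_nhds
    have h2 := (ENNReal.continuous_ofReal.tendsto 0).comp hreal
    simpa [Function.comp_def] using h2
  have hdiam : ∀ j : ℕ, ∀ σ, EMetric.diam (t j σ) ≤ ENNReal.ofReal ((2:ℝ)⁻¹^(V α β j)) := by
    intro j σ
    apply EMetric.diam_le
    rintro p ⟨x, ⟨hxU, hxa⟩, rfl⟩ q ⟨y, ⟨hyU, hya⟩, rfl⟩
    rw [edist_dist, hdist]
    apply ENNReal.ofReal_le_ofReal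
    apply cantorDist_le_pow
    intro n hn
    rw [hxa n hn, hya n hn]
  have hcov : ∀ j : ℕ, s ⊆ ⋃ σ, t j σ := by
    intro j
    rintro p ⟨u, hu, rfl⟩
    rw [Set.mem_iUnion]
    exact ⟨fun i => u i.1, u, ⟨hu, fun n hn => Fσ_agree hu hn⟩, rfl⟩
  have hμH := Measure.hausdorffMeasure_le_liminf_sum d s
    (fun j => ENNReal.ofReal ((2:ℝ)⁻¹^(V α β j))) hrt t
    (Eventually.of_forall hdiam) (Eventually.of_forall hcov)
  -- now bound the sums
  set g : ℕ → ℝ := fun j => (2:ℝ)^(cnt α β (V α β j)) * ((2:ℝ)⁻¹^(V α β j))^d with hg_def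
  have hsum_le : ∀ j : ℕ, (∑ σ : {i // i ∈ fsb α β (V α β j)} → ZMod 2,
      EMetric.diam (t j σ) ^ d) ≤ ENNReal.ofReal (g j) := by
    intro j
    have hd0 : 0 ≤ d := le_trans h0 hd.le
    have hstep : ∀ σ : {i // i ∈ fsb α β (V α β j)} → ZMod 2,
        EMetric.diam (t j σ) ^ d ≤ ENNReal.ofReal (((2:ℝ)⁻¹^(V α β j))^d) := by
      intro σ
      calc EMetric.diam (t j σ) ^ d ≤ (ENNReal.ofReal ((2:ℝ)⁻¹^(V α β j))) ^ d :=
            ENNReal.rpow_le_rpow (hdiam j σ) hd0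
        _ = ENNReal.ofReal (((2:ℝ)⁻¹^(V α β j))^d) := ENNReal.ofReal_rpow_of_pos (by positivity)
    calc (∑ σ : {i // i ∈ fsb α β (V α β j)} → ZMod 2, EMetric.diam (t j σ) ^ d)
        ≤ ∑ _σ : {i // i ∈ fsb α β (V α β j)} → ZMod 2,
            ENNReal.ofReal (((2:ℝ)⁻¹^(V α β j))^d) := Finset.sum_le_sum (fun σ _ => hstep σ)
      _ = (Fintype.card ({i // i ∈ fsb α β (V α β j)} → ZMod 2)) •
            ENNReal.ofReal (((2:ℝ)⁻¹^(V α β j))^d) := by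
          rw [Finset.sum_const, Finset.card_univ]
      _ = ENNReal.ofReal (g j) := by
          rw [card_fun_fsb, nsmul_eq_mul, hg_def]
          rw [ENNReal.ofReal_mul (by positivity)]
          congr 1
          rw [ENNReal.ofReal_pow (by norm_num : (0:ℝ) ≤ 2)]
          push_cast
          norm_num
  -- g tends to zero
  have hgt : Tendsto g atTop (𝓝 0) := by
    set ε := (d - α)/2 with hε_def
    have hε : 0 < ε := by simp [hε_def]; linarith
    set q := (2:ℝ) ^ (-ε) with hq_def
    have hq0 : 0 < q := Real.rpow_pos_of_pos (by norm_num) _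
    have hq1 : q < 1 := by
      rw [hq_def]
      apply Real.rpow_lt_one_of_one_lt_of_neg (by norm_num)
      linarith
    obtain ⟨J, hJ⟩ := valley_seq h0 hαβ h1 (α := α) (β := β) hε
    apply squeeze_zero' (g := fun j => q ^ j)
    · exact Eventually.of_forall fun j => by positivity
    · filter_upwards [eventually_ge_atTop J] with j hj
      have hAa : (cnt α β (V α β j) : ℝ) ≤ (α + ε) * V α β j := by
        rw [cnt_V]; exact hJ j hj
      have hvj : (j : ℝ) ≤ (V α β j : ℝ) := by
        have := succ_le_V (α := α) (β := β) j
        exact_mod_cast (by omega : j ≤ V α β j)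
      have hεd : d - ε = α + ε := by rw [hε_def]; ring
      have hcv : (cnt α β (V α β j) : ℝ) ≤ (d - ε) * (V α β j : ℝ) := by
        rw [hεd]; exact hAa
      exact rpow_helper hε hcv hvj
    · exact tendsto_pow_atTop_nhds_zero_of_lt_one hq0.le hq1
  have hlim : Tendsto (fun j => ENNReal.ofReal (g j)) atTop (𝓝 0) := by
    have := (ENNReal.continuous_ofReal.tendsto 0).comp hgt
    simpa [Function.comp_def] using this
  have hliminf : liminf (fun j => ∑ σ : {i // i ∈ fsb α β (V α β j)} → ZMod 2,
      EMetric.diam (t j σ) ^ d) atTop ≤ 0 := by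
    calc liminf (fun j => ∑ σ : {i // i ∈ fsb α β (V α β j)} → ZMod 2,
        EMetric.diam (t j σ) ^ d) atTop
        ≤ liminf (fun j => ENNReal.ofReal (g j)) atTop :=
          liminf_le_liminf (Eventually.of_forall hsum_le)
      _ = 0 := hlim.liminf_eq
  exact le_antisymm (le_trans hμH hliminf) zero_le

end Hausdorff

lemma rpow_helper2 {c K m : ℕ} {d : ℝ} (hd0 : 0 ≤ d)
    (h : (K:ℝ) + d*((m:ℝ)+1) ≤ (c:ℝ)) :
    (2:ℝ)⁻¹^c ≤ (2:ℝ)⁻¹^K * (((2:ℝ)⁻¹)^(m+1))^d := by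
  have hbase : ∀ n : ℕ, ((2:ℝ)⁻¹^n : ℝ) = (2:ℝ)^(-(n:ℝ)) := by
    intro n
    rw [← Real.rpow_natCast (2:ℝ)⁻¹ n, ← Real.rpow_neg_one (2:ℝ),
      ← Real.rpow_mul (by norm_num : (0:ℝ) ≤ 2)]
    norm_num
  have h3 : (((2:ℝ)^(-(((m:ℝ))+1)))^d : ℝ) = (2:ℝ)^(-((m:ℝ)+1)*d) := by
    rw [← Real.rpow_mul (by norm_num : (0:ℝ) ≤ 2)]
  have hm1 : ((m+1 : ℕ) : ℝ) = (m:ℝ)+1 := by push_cast; ring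
  rw [hbase c, hbase K, hbase (m+1), hm1, h3,
    ← Real.rpow_add (by norm_num : (0:ℝ) < 2)]
  apply Real.rpow_le_rpow_of_exponent_le (by norm_num)
  linarith

lemma enn_inv_pow (n : ℕ) : (2:ℝ≥0∞)⁻¹^n = ENNReal.ofReal ((2:ℝ)⁻¹^n) := by
  rw [ENNReal.ofReal_pow (by norm_num : (0:ℝ) ≤ 2⁻¹),
    ENNReal.ofReal_inv_of_pos (by norm_num : (0:ℝ) < 2)]
  norm_num

section Hausdorff2
variable {X : Type*} [MetricSpace X] [MeasurableSpace X] [BorelSpace X]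
  {φ : (ℕ → ZMod 2) → X}
  (hbij : Function.Bijective φ)
  (hdist : ∀ x y : ℕ → ZMod 2, dist (φ x) (φ y) = cantorDist x y)
  {α β : ℝ} (h0 : 0 ≤ α) (hαβ : α ≤ β) (h1 : β ≤ 1)

include h0 hαβ h1 in
lemma cnt_ge_lin {d : ℝ} (hd0 : 0 ≤ d) (hdα : d < α) (K : ℕ) :
    ∃ M : ℕ, ∀ m, M ≤ m → (K:ℝ) + d*((m:ℝ)+1) ≤ (cnt α β m : ℝ) := by
  set ε := (α - d)/2 with hε_def
  have hε : 0 < ε := by rw [hε_def]; linarith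
  obtain ⟨N, hN⟩ := cnt_eventually h0 hαβ h1 (α := α) (β := β) hε
  obtain ⟨M₂, hM₂⟩ := exists_nat_ge (((K:ℝ) + d)/ε)
  refine ⟨max N M₂, fun m hm => ?_⟩
  have h1' := (hN m (le_trans (le_max_left _ _) hm)).1
  have hM₂m : ((K:ℝ) + d)/ε ≤ (m:ℝ) := by
    calc ((K:ℝ) + d)/ε ≤ (M₂:ℝ) := hM₂
      _ ≤ (m:ℝ) := by exact_mod_cast le_trans (le_max_right N M₂) hm
  rw [div_le_iff₀ hε] at hM₂m
  have hαε : α - ε = d + ε := by rw [hε_def]; ring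
  nlinarith [Nat.cast_nonneg (α := ℝ) m]

include hbij hdist h0 hαβ h1 in
lemma pointwise_bound {d : ℝ} (hd0 : 0 ≤ d) (hdα : d < α) {K M : ℕ}
    (hM : ∀ m, M ≤ m → (K:ℝ) + d*((m:ℝ)+1) ≤ (cnt α β m : ℝ))
    (t : Set X) (ht : EMetric.diam t ≤ ENNReal.ofReal ((2:ℝ)⁻¹^M)) :
    μX φ α β t ≤ (2:ℝ≥0∞)⁻¹^K * (⨆ _ : t.Nonempty, EMetric.diam t ^ d) := by
  have hα : 0 < α := lt_of_le_of_lt hd0 hdα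
  rcases t.eq_empty_or_nonempty with rfl | hne
  · simp
  · rw [iSup_pos hne]
    rcases eq_or_lt_of_le (zero_le : 0 ≤ EMetric.diam t) with hzero | hpos
    · obtain ⟨p, hp⟩ := hne
      have hsub : t ⊆ {p} := fun q hq => (EMetric.diam_eq_zero_iff.1 hzero.symm) hq hp
      calc μX φ α β t ≤ μX φ α β {p} := measure_mono hsub
        _ = 0 := μX_singleton hbij hdist α β h0 hαβ h1 hα p
        _ ≤ _ := zero_le
    · have hetop : EMetric.diam t ≠ ⊤ :=
        (lt_of_le_of_lt ht ENNReal.ofReal_lt_top).ne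
      have hex : ∃ k : ℕ, ENNReal.ofReal ((2:ℝ)⁻¹^k) < EMetric.diam t := by
        have her : 0 < (EMetric.diam t).toReal := ENNReal.toReal_pos hpos.ne' hetop
        obtain ⟨k, hk⟩ := exists_pow_lt_of_lt_one her (by norm_num : (2:ℝ)⁻¹ < 1)
        refine ⟨k, ?_⟩
        calc ENNReal.ofReal ((2:ℝ)⁻¹^k) < ENNReal.ofReal (EMetric.diam t).toReal :=
            (ENNReal.ofReal_lt_ofReal_iff her).2 hk
          _ = EMetric.diam t := ENNReal.ofReal_toReal hetop
      have hk₀spec : ENNReal.ofReal ((2:ℝ)⁻¹^(Nat.find hex)) < EMetric.diam t :=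
        Nat.find_spec hex
      have hk₀M : M < Nat.find hex := by
        by_contra hcon
        push_neg at hcon
        have hmono : ENNReal.ofReal ((2:ℝ)⁻¹^M) ≤ ENNReal.ofReal ((2:ℝ)⁻¹^(Nat.find hex)) :=
          ENNReal.ofReal_le_ofReal
            (pow_le_pow_of_le_one (by norm_num) (by norm_num) hcon)
        exact absurd (lt_of_le_of_lt (le_trans ht hmono) hk₀spec) (lt_irrefl _)
      set m := Nat.find hex - 1 with hm_def
      have hm1 : m + 1 = Nat.find hex := by omega
      have hmM : M ≤ m := by omega
      have hmin : ¬ ENNReal.ofReal ((2:ℝ)⁻¹^m) < EMetric.diam t :=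
        Nat.find_min hex (by omega)
      push_neg at hmin
      have hμ : μX φ α β t ≤ (2:ℝ≥0∞)⁻¹ ^ cnt α β m :=
        μX_set_le_of_ediam hbij hdist α β hmin
      have hed : ENNReal.ofReal (((2:ℝ)⁻¹^(m+1))^d) ≤ EMetric.diam t ^ d := by
        calc ENNReal.ofReal (((2:ℝ)⁻¹^(m+1))^d)
            = (ENNReal.ofReal ((2:ℝ)⁻¹^(m+1)))^d :=
              (ENNReal.ofReal_rpow_of_pos (by positivity)).symm
          _ ≤ EMetric.diam t ^ d := by
              apply ENNReal.rpow_le_rpow _ hd0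
              rw [hm1]
              exact hk₀spec.le
      have hRe : (2:ℝ)⁻¹ ^ cnt α β m ≤ (2:ℝ)⁻¹^K * (((2:ℝ)⁻¹)^(m+1))^d :=
        rpow_helper2 hd0 (hM m hmM)
      calc μX φ α β t ≤ (2:ℝ≥0∞)⁻¹ ^ cnt α β m := hμ
        _ = ENNReal.ofReal ((2:ℝ)⁻¹ ^ cnt α β m) := enn_inv_pow _
        _ ≤ ENNReal.ofReal ((2:ℝ)⁻¹^K * (((2:ℝ)⁻¹)^(m+1))^d) :=
            ENNReal.ofReal_le_ofReal hRe
        _ = ENNReal.ofReal ((2:ℝ)⁻¹^K) * ENNReal.ofReal ((((2:ℝ)⁻¹)^(m+1))^d) :=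
            ENNReal.ofReal_mul (by positivity)
        _ = (2:ℝ≥0∞)⁻¹^K * ENNReal.ofReal ((((2:ℝ)⁻¹)^(m+1))^d) := by rw [enn_inv_pow]
        _ ≤ (2:ℝ≥0∞)⁻¹^K * EMetric.diam t ^ d := mul_le_mul_right hed _

include hbij hdist h0 hαβ h1 in
lemma hm_top_of_lt {d : ℝ} (hd0 : 0 ≤ d) (hdα : d < α) :
    μH[d] (φ '' UR (Rset α β)) = ∞ := by
  have key : ∀ K : ℕ, (2:ℝ≥0∞)^K ≤ μH[d] (φ '' UR (Rset α β)) := by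
    intro K
    obtain ⟨M, hM⟩ := cnt_ge_lin h0 hαβ h1 (α := α) (β := β) hd0 hdα K
    rw [Measure.hausdorffMeasure_apply]
    apply le_iSup₂_of_le (ENNReal.ofReal ((2:ℝ)⁻¹^M))
      (ENNReal.ofReal_pos.2 (by positivity))
    refine le_iInf fun tseq => le_iInf fun hcov => le_iInf fun hdiam => ?_
    have hptw : ∀ n : ℕ, μX φ α β (tseq n)
        ≤ (2:ℝ≥0∞)⁻¹^K * (⨆ _ : (tseq n).Nonempty, EMetric.diam (tseq n) ^ d) :=
      fun n => pointwise_bound hbij hdist h0 hαβ h1 hd0 hdα hM (tseq n) (hdiam n)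
    have hone : (1:ℝ≥0∞) ≤ (2:ℝ≥0∞)⁻¹^K *
        ∑' n, (⨆ _ : (tseq n).Nonempty, EMetric.diam (tseq n) ^ d) := by
      calc (1:ℝ≥0∞) = μX φ α β (φ '' UR (Rset α β)) := (μX_image hbij hdist α β).symm
        _ ≤ μX φ α β (⋃ n, tseq n) := measure_mono hcov
        _ ≤ ∑' n, μX φ α β (tseq n) := measure_iUnion_le _
        _ ≤ ∑' n, (2:ℝ≥0∞)⁻¹^K * (⨆ _ : (tseq n).Nonempty, EMetric.diam (tseq n) ^ d) :=
            ENNReal.tsum_le_tsum hptw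
        _ = (2:ℝ≥0∞)⁻¹^K *
            ∑' n, (⨆ _ : (tseq n).Nonempty, EMetric.diam (tseq n) ^ d) :=
            ENNReal.tsum_mul_left
    calc (2:ℝ≥0∞)^K = (2:ℝ≥0∞)^K * 1 := (mul_one _).symm
      _ ≤ (2:ℝ≥0∞)^K * ((2:ℝ≥0∞)⁻¹^K *
          ∑' n, (⨆ _ : (tseq n).Nonempty, EMetric.diam (tseq n) ^ d)) :=
          mul_le_mul_right hone _
      _ = ∑' n, (⨆ _ : (tseq n).Nonempty, EMetric.diam (tseq n) ^ d) := by
          rw [← mul_assoc, ← ENNReal.inv_pow, ENNReal.mul_inv_cancel (by positivity)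
            (ENNReal.pow_ne_top ENNReal.ofNat_ne_top), one_mul]
  by_contra hne
  obtain ⟨n, hn⟩ := ENNReal.exists_nat_gt hne
  have h2 : (n:ℝ≥0∞) ≤ (2:ℝ≥0∞)^n := by
    have hnat : (n:ℕ) ≤ 2^n := (Nat.lt_two_pow_self (n := n)).le
    calc (n:ℝ≥0∞) ≤ ((2^n : ℕ) : ℝ≥0∞) := by exact_mod_cast hnat
      _ = (2:ℝ≥0∞)^n := by push_cast; ring
  exact absurd (le_trans h2 (key n)) (not_le.2 hn)

include hbij hdist h0 hαβ h1 in
lemma dimH_image_eq : dimH (φ '' UR (Rset α β)) = ENNReal.ofReal α := by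
  apply le_antisymm
  · by_contra hcon
    push_neg at hcon
    obtain ⟨r, hr1, hr2⟩ := ENNReal.lt_iff_exists_nnreal_btwn.1 hcon
    have hμtop : μH[(r:ℝ)] (φ '' UR (Rset α β)) = ∞ :=
      hausdorffMeasure_of_lt_dimH hr2
    have hr0 : 0 < (r:ℝ) := by
      by_contra hr0
      push_neg at hr0
      have : r = 0 := by exact_mod_cast le_antisymm (by exact_mod_cast hr0) zero_le
      rw [this] at hr1
      simp at hr1
    have hαr : α < (r:ℝ) := by
      rw [← ENNReal.ofReal_coe_nnreal] at hr1
      exact (ENNReal.ofReal_lt_ofReal_iff hr0).1 hr1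
    have := hm_zero_of_gt hbij hdist h0 hαβ h1 (α := α) (β := β) hαr
    rw [this] at hμtop
    exact absurd hμtop (by simp)
  · apply ENNReal.le_of_forall_nnreal_lt
    intro r hr
    have hrα : (r:ℝ) < α := by
      by_contra hcon
      push_neg at hcon
      have : ENNReal.ofReal α ≤ (r:ℝ≥0∞) := by
        rw [← ENNReal.ofReal_coe_nnreal]
        exact ENNReal.ofReal_le_ofReal hcon
      exact absurd hr (not_lt.2 this)
    exact le_dimH_of_hausdorffMeasure_eq_top
      (hm_top_of_lt hbij hdist h0 hαβ h1 (α := α) (β := β) r.coe_nonneg hrα)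

end Hausdorff2

/-- For every pair of reals `0 ≤ α ≤ β ≤ 1` there is a closed subgroup `U`
of the Cantor group `E` whose lower box dimension is `α` and whose upper box dimension is `β`;
moreover `U` can be chosen with Hausdorff dimension `α` as well. -/
theorem exists_closed_subgroup_with_dims
    {X : Type*} [MetricSpace X] (φ : (ℕ → ZMod 2) → X)
    (hbij : Function.Bijective φ)
    (hdist : ∀ x y : ℕ → ZMod 2, dist (φ x) (φ y) = cantorDist x y)
    (α β : ℝ) (h0 : 0 ≤ α) (hαβ : α ≤ β) (h1 : β ≤ 1) :
    ∃ U : Set (ℕ → ZMod 2),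
      (0 : ℕ → ZMod 2) ∈ U ∧
      (∀ x ∈ U, ∀ y ∈ U, x + y ∈ U) ∧
      (∀ x ∈ U, -x ∈ U) ∧
      IsClosed (φ '' U) ∧
      lowerBoxDim (φ '' U) = α ∧
      upperBoxDim (φ '' U) = β ∧
      dimH (φ '' U) = ENNReal.ofReal α := by
  borelize X
  refine ⟨UR (Rset α β), fun n _ => rfl, ?_, ?_,
    isClosed_image_UR hbij hdist _,
    lowerBoxDim_eq hbij hdist h0 hαβ h1,
    upperBoxDim_eq hbij hdist h0 hαβ h1,
    dimH_image_eq hbij hdist h0 hαβ h1⟩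
  · intro x hx y hy n hn
    have := hx n hn
    have := hy n hn
    simp [Pi.add_apply, hx n hn, hy n hn]
  · intro x hx n hn
    simp [Pi.neg_apply, hx n hn]

end CantorGroup
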